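/- arXiv:2106.00519 — 2 statements merged into one kernel-verified Lean document; each statement's English description precedes it below -/
import Mathlib

section
/- Let F : ℝ^n ⇒ ℝ^n be locally maximally monotone at (x̄, ȳ) ∈ gph F. Then F is graphically Lipschitzian of dimension n at (x̄, ȳ) with transformation mapping Φ(x, y) = (x + y, x), and consequently F has the SCD property around (x̄, ȳ). Moreover, for every (x, y) ∈ gph F sufficiently close to (x̄, ȳ) and every subspace L ∈ Sp F(x, y) there is a firmly nonexpansive n×n matrix B (i.e. ⟨Bv, v⟩ ≥ ‖Bv‖² for all v ∈ ℝ^n) such that L = rge(B, I − B) := {(Bp, (I − B)p) : p ∈ ℝ^n} and L* = rge(Bᵀ, I − Bᵀ). -/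
open Filter Topology Metric Set
open scoped InnerProductSpace RealInnerProductSpace ENNReal NNReal

noncomputable section

namespace SCD

abbrev E (n : ℕ) := EuclideanSpace ℝ (Fin n)
abbrev E2 (n : ℕ) := WithLp 2 (E n × E n)

variable {n : ℕ}

def lp2 (n : ℕ) : E2 n ≃ₗ[ℝ] E n × E n := WithLp.linearEquiv 2 ℝ (E n × E n)
def mk2 (u v : E n) : E2 n := (lp2 n).symm (u, v)
def fst2 (z : E2 n) : E n := (lp2 n z).1
def snd2 (z : E2 n) : E n := (lp2 n z).2

instance : FiniteDimensional ℝ (E2 n) := Module.Finite.equiv (lp2 n).symm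

def tcone {H : Type*} [NormedAddCommGroup H] [NormedSpace ℝ H] (A : Set H) (z : H) : Set H :=
  {w | ∃ t : ℕ → ℝ, ∃ wk : ℕ → H, (∀ k, 0 < t k) ∧ Tendsto t atTop (𝓝 0) ∧
      Tendsto wk atTop (𝓝 w) ∧ ∀ k, z + t k • wk k ∈ A}

def gph (F : E n → Set (E n)) : Set (E2 n) := {z | snd2 z ∈ F (fst2 z)}
def projC (L : Submodule ℝ (E2 n)) : E2 n →L[ℝ] E2 n := L.subtypeL.comp (L.orthogonalProjectionOnto)
def dZ (L₁ L₂ : Submodule ℝ (E2 n)) : ℝ := ‖projC L₁ - projC L₂‖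

def Sneg (n : ℕ) : E2 n ≃ₗ[ℝ] E2 n :=
  (lp2 n).trans (((LinearEquiv.prodComm ℝ (E n) (E n)).trans
    ((LinearEquiv.neg ℝ).prodCongr (LinearEquiv.refl ℝ (E n)))).trans (lp2 n).symm)

def adjS (L : Submodule ℝ (E2 n)) : Submodule ℝ (E2 n) := Lᗮ.map (Sneg n).toLinearMap

/-- `O_F`: the set of points of `gph F` where `F` is graphically smooth of dimension `n`,
i.e. the tangent cone to the graph is an `n`-dimensional linear subspace. -/
def OF (F : E n → Set (E n)) : Set (E2 n) :=
  {z | z ∈ gph F ∧ ∃ L : Submodule ℝ (E2 n),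
    Module.finrank ℝ L = n ∧ (L : Set (E2 n)) = tcone (gph F) z}

/-- The primal generalized derivative `Sp F(x,y)`. -/
def Sp (F : E n → Set (E n)) (z : E2 n) : Set (Submodule ℝ (E2 n)) :=
  {L | Module.finrank ℝ L = n ∧ ∃ (zk : ℕ → E2 n) (Lk : ℕ → Submodule ℝ (E2 n)),
      (∀ k, zk k ∈ gph F ∧ Module.finrank ℝ (Lk k) = n ∧
        ((Lk k : Set (E2 n)) = tcone (gph F) (zk k))) ∧
      Tendsto zk atTop (𝓝 z) ∧ Tendsto (fun k => dZ (Lk k) L) atTop (𝓝 0)}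

/-- The dual generalized derivative `Sp* F(x,y)`. -/
def SpStar (F : E n → Set (E n)) (z : E2 n) : Set (Submodule ℝ (E2 n)) :=
  {L' | ∃ L ∈ Sp F z, L' = adjS L}

/-- `F` has the SCD property at `z ∈ gph F`. -/
def SCDAt (F : E n → Set (E n)) (z : E2 n) : Prop := (Sp F z).Nonempty

/-- `F` has the SCD property around `z ∈ gph F`. -/
def SCDAround (F : E n → Set (E n)) (z : E2 n) : Prop :=
  ∃ δ > (0 : ℝ), ∀ z' ∈ gph F, dist z' z < δ → SCDAt F z'

/-- `Z_n^{reg}`: the subspaces `L ∈ Z_n` such that `(y*, 0) ∈ L` implies `y* = 0`. -/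
def Znreg (n : ℕ) : Set (Submodule ℝ (E2 n)) :=
  {L | Module.finrank ℝ L = n ∧ ∀ y : E n, mk2 y 0 ∈ L → y = 0}

/-- `F` is SCD regular around `z ∈ gph F`. -/
def SCDRegularAround (F : E n → Set (E n)) (z : E2 n) : Prop :=
  SCDAround F z ∧ ∀ L ∈ SpStar F z, L ∈ Znreg n

/-- The set of values `‖y*‖` for `(y*, x*)` in some `L ∈ Sp* F(x,y)` with `‖x*‖ ≤ 1`;
its supremum is the modulus of SCD regularity. -/
def scdregSet (F : E n → Set (E n)) (z : E2 n) : Set ℝ :=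
  {r | ∃ L ∈ SpStar F z, ∃ w : E2 n, w ∈ L ∧ ‖snd2 w‖ ≤ 1 ∧ r = ‖fst2 w‖}

/-- The modulus of SCD regularity `scd reg F(x,y)`. -/
def scdreg (F : E n → Set (E n)) (z : E2 n) : ℝ := sSup (scdregSet F z)

/-- The graph of the outer limiting graphical derivative `D^♯F(x̄,ȳ)`. -/
def DsharpG (F : E n → Set (E n)) (z : E2 n) : Set (E2 n) :=
  {w | ∃ (zk : ℕ → E2 n) (wk : ℕ → E2 n),
    (∀ k, zk k ∈ gph F ∧ wk k ∈ tcone (gph F) (zk k)) ∧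
    Tendsto zk atTop (𝓝 z) ∧ Tendsto wk atTop (𝓝 w)}

/-- The regular (Fréchet) normal cone: the polar of the tangent cone. -/
def regN (A : Set (E2 n)) (z : E2 n) : Set (E2 n) := {w | ∀ v ∈ tcone A z, ⟪w, v⟫_ℝ ≤ 0}

/-- The limiting (Mordukhovich) normal cone. -/
def limN (A : Set (E2 n)) (z : E2 n) : Set (E2 n) :=
  {w | ∃ (zk wk : ℕ → E2 n), (∀ k, zk k ∈ A ∧ wk k ∈ regN A (zk k)) ∧
    Tendsto zk atTop (𝓝 z) ∧ Tendsto wk atTop (𝓝 w)}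

/-- The graph of the limiting coderivative: `(y*, x*)` with `(x*, -y*)` in the limiting
normal cone to the graph. -/
def coderivG (F : E n → Set (E n)) (z : E2 n) : Set (E2 n) :=
  {w | mk2 (snd2 w) (-(fst2 w)) ∈ limN (gph F) z}

/-- The graph of the strict (paratingent) derivative `D_*F(x̄,ȳ)`. -/
def paraconeG (F : E n → Set (E n)) (z : E2 n) : Set (E2 n) :=
  {w | ∃ (t : ℕ → ℝ) (z1 z2 : ℕ → E2 n), (∀ k, 0 < t k) ∧ Tendsto t atTop (𝓝 0) ∧
    (∀ k, z1 k ∈ gph F ∧ z2 k ∈ gph F) ∧ Tendsto z1 atTop (𝓝 z) ∧ Tendsto z2 atTop (𝓝 z) ∧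
    Tendsto (fun k => (t k)⁻¹ • (z2 k - z1 k)) atTop (𝓝 w)}

/-- The B-subdifferential of `f : U → ℝ^n` at `x`. -/
def Bsub (f : E n → E n) (U : Set (E n)) (x : E n) : Set (E n →L[ℝ] E n) :=
  {A | ∃ xk : ℕ → E n, (∀ k, xk k ∈ U ∧ DifferentiableAt ℝ f (xk k)) ∧
    Tendsto xk atTop (𝓝 x) ∧ Tendsto (fun k => fderiv ℝ f (xk k)) atTop (𝓝 A)}

/-- A single-valued map `f` on `U` viewed as a set-valued map. -/
def sv (f : E n → E n) (U : Set (E n)) : E n → Set (E n) := fun x => {y | x ∈ U ∧ y = f x}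

/-- The linear map `u ↦ (u, A u)`. -/
def graphMap (A : E n →L[ℝ] E n) : E n →ₗ[ℝ] E2 n :=
  (lp2 n).symm.toLinearMap.comp (LinearMap.prod LinearMap.id A.toLinearMap)

/-- The subspace `rge(I, A) = {(u, Au) : u ∈ ℝ^n}`. -/
def rgeIA (A : E n →L[ℝ] E n) : Submodule ℝ (E2 n) := LinearMap.range (graphMap A)

/-- The linear map `p ↦ (C p, p)`. -/
def graphMapRev (C : E n →L[ℝ] E n) : E n →ₗ[ℝ] E2 n :=
  (lp2 n).symm.toLinearMap.comp (LinearMap.prod C.toLinearMap LinearMap.id)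

/-- The subspace `rge(C, I) = {(C p, p) : p ∈ ℝ^n}`. -/
def rgeCI (C : E n →L[ℝ] E n) : Submodule ℝ (E2 n) := LinearMap.range (graphMapRev C)

/-- The preimage map `F^{-1}(y)`. -/
def Finv (F : E n → Set (E n)) (y : E n) : Set (E n) := {x | y ∈ F x}

/-- Metric subregularity at `z ∈ gph F` with constant `κ`. -/
def SubregWith (F : E n → Set (E n)) (z : E2 n) (κ : ℝ) : Prop :=
  ∃ δ > (0 : ℝ), ∀ x' : E n, dist x' (fst2 z) < δ →
    EMetric.infEdist x' (Finv F (snd2 z)) ≤ ENNReal.ofReal κ * EMetric.infEdist (snd2 z) (F x')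

/-- `F` is metrically subregular at `z ∈ gph F`. -/
def SubregAt (F : E n → Set (E n)) (z : E2 n) : Prop := ∃ κ, 0 ≤ κ ∧ SubregWith F z κ

/-- The modulus of metric subregularity `subreg F(x,y)`. -/
def subregMod (F : E n → Set (E n)) (z : E2 n) : ℝ := sInf {κ | 0 ≤ κ ∧ SubregWith F z κ}

/-- `F` is strongly metrically subregular at `z ∈ gph F`. -/
def StrSubregAt (F : E n → Set (E n)) (z : E2 n) : Prop :=
  SubregAt F z ∧ ∃ δ > (0 : ℝ), ∀ x' ∈ Finv F (snd2 z), dist x' (fst2 z) < δ → x' = fst2 z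

/-- `F` is strongly metrically subregular around `zb ∈ gph F` (with finite `lsubreg`). -/
def StrSubregAround (F : E n → Set (E n)) (zb : E2 n) : Prop :=
  ∃ δ > (0 : ℝ), (∀ z ∈ gph F, dist z zb < δ → StrSubregAt F z) ∧
    ∃ c : ℝ, ∀ z ∈ gph F, dist z zb < δ → subregMod F z ≤ c

/-- `lsubreg F(x̄,ȳ)`: the limsup of `subreg F(x,y)` over graph points `(x,y) → (x̄,ȳ)`. -/
def lsubreg (F : E n → Set (E n)) (zb : E2 n) : ℝ :=
  Filter.limsup (fun z => subregMod F z) (𝓝[gph F] zb)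

/-- Metric regularity around `zb ∈ gph F` with constant `κ`. -/
def RegWith (F : E n → Set (E n)) (zb : E2 n) (κ : ℝ) : Prop :=
  ∃ δ > (0 : ℝ), ∀ x y : E n, dist x (fst2 zb) < δ → dist y (snd2 zb) < δ →
    EMetric.infEdist x (Finv F y) ≤ ENNReal.ofReal κ * EMetric.infEdist y (F x)

/-- `F` is metrically regular around `zb ∈ gph F`. -/
def MetrRegAround (F : E n → Set (E n)) (zb : E2 n) : Prop := ∃ κ, 0 ≤ κ ∧ RegWith F zb κ

/-- The modulus of metric regularity `reg F(x̄,ȳ)`. -/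
def regMod (F : E n → Set (E n)) (zb : E2 n) : ℝ := sInf {κ | 0 ≤ κ ∧ RegWith F zb κ}

/-- `F` is strongly metrically regular around `zb ∈ gph F`: metrically regular and `F⁻¹`
has a single-valued localization around `(ȳ, x̄)`. -/
def StrRegAround (F : E n → Set (E n)) (zb : E2 n) : Prop :=
  MetrRegAround F zb ∧
  ∃ (X' Y' : Set (E n)) (h : E n → E n), IsOpen X' ∧ IsOpen Y' ∧
    fst2 zb ∈ X' ∧ snd2 zb ∈ Y' ∧ h (snd2 zb) = fst2 zb ∧
    gph F ∩ {w | fst2 w ∈ X' ∧ snd2 w ∈ Y'} = {w | snd2 w ∈ Y' ∧ fst2 w = h (snd2 w)}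

/-- `F` is SCD semismooth* at `zb ∈ gph F`. -/
def SCDSemismoothAt (F : E n → Set (E n)) (zb : E2 n) : Prop :=
  SCDAround F zb ∧ ∀ ε > (0 : ℝ), ∃ δ > (0 : ℝ), ∀ z ∈ gph F, dist z zb ≤ δ →
    ∀ L ∈ SpStar F z, ∀ w : E2 n, w ∈ L →
      |⟪snd2 w, fst2 z - fst2 zb⟫_ℝ - ⟪fst2 w, snd2 z - snd2 zb⟫_ℝ| ≤ ε * ‖z - zb‖ * ‖w‖

/-- `F` is graphically Lipschitzian of dimension `n` at `zb` with transformation mapping `Φ`,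
local inverse `Ψ`, neighborhood `W`, and `K`-Lipschitz map `f : U → ℝ^n`. -/
def GraphLipWith (F : E n → Set (E n)) (zb : E2 n) (Φ Ψ : E2 n → E2 n)
    (W : Set (E2 n)) (U : Set (E n)) (f : E n → E n) (K : ℝ≥0) : Prop :=
  IsOpen W ∧ zb ∈ W ∧ ContDiffOn ℝ 1 Φ W ∧ Set.InjOn Φ W ∧ IsOpen (Φ '' W) ∧
  ContDiffOn ℝ 1 Ψ (Φ '' W) ∧ Set.LeftInvOn Ψ Φ W ∧
  IsOpen U ∧ LipschitzOnWith K f U ∧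
  Φ '' (gph F ∩ W) = {w | fst2 w ∈ U ∧ snd2 w = f (fst2 w)}

/-- `F` is graphically Lipschitzian of dimension `n` at `zb` with transformation mapping `Φ`. -/
def GraphLipAt (F : E n → Set (E n)) (zb : E2 n) (Φ : E2 n → E2 n) : Prop :=
  ∃ Ψ W U f K, GraphLipWith F zb Φ Ψ W U f K

/-- `∇̄^Φ F(x̄,ȳ)`: the `(2n)×n` matrices `Z` (as linear maps `ℝ^n → ℝ^{2n}`) with
`rge Z ∈ Sp F(x̄,ȳ)` and upper block of `∇Φ(x̄,ȳ)Z` equal to the identity. -/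
def BsubPhi (F : E n → Set (E n)) (zb : E2 n) (Φ : E2 n → E2 n) : Set (E n →L[ℝ] E2 n) :=
  {Z | LinearMap.range (Z : E n →ₗ[ℝ] E2 n) ∈ Sp F zb ∧ ∀ p, fst2 (fderiv ℝ Φ zb (Z p)) = p}

/-- A (globally) monotone set-valued map. -/
def MonoMap (T : E n → Set (E n)) : Prop :=
  ∀ x₁ y₁ x₂ y₂, y₁ ∈ T x₁ → y₂ ∈ T x₂ → 0 ≤ ⟪y₁ - y₂, x₁ - x₂⟫_ℝ

/-- `F` is locally maximally monotone at `z ∈ gph F`. -/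
def LocMaxMonoAt (F : E n → Set (E n)) (z : E2 n) : Prop :=
  ∃ X Y : Set (E n), IsOpen X ∧ IsOpen Y ∧ fst2 z ∈ X ∧ snd2 z ∈ Y ∧
    (∀ w₁ ∈ gph F ∩ {w | fst2 w ∈ X ∧ snd2 w ∈ Y},
     ∀ w₂ ∈ gph F ∩ {w | fst2 w ∈ X ∧ snd2 w ∈ Y},
       0 ≤ ⟪snd2 w₁ - snd2 w₂, fst2 w₁ - fst2 w₂⟫_ℝ) ∧
    ∀ T : E n → Set (E n), MonoMap T →
      gph F ∩ {w | fst2 w ∈ X ∧ snd2 w ∈ Y} ⊆ gph T →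
      gph F ∩ {w | fst2 w ∈ X ∧ snd2 w ∈ Y} = gph T ∩ {w | fst2 w ∈ X ∧ snd2 w ∈ Y}

/-- `F` is locally maximally hypomonotone at `z ∈ gph F`:
`γI + F` is locally maximally monotone at `(x, γx + y)` for some `γ ≥ 0`. -/
def LocMaxHypoAt (F : E n → Set (E n)) (z : E2 n) : Prop :=
  ∃ γ : ℝ, 0 ≤ γ ∧ LocMaxMonoAt (fun x => (fun y => γ • x + y) '' F x)
    (mk2 (fst2 z) (γ • fst2 z + snd2 z))

/-- A firmly nonexpansive matrix: `⟨Bv, v⟩ ≥ ‖Bv‖²` for all `v`. -/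
def FirmNonexp (B : E n →L[ℝ] E n) : Prop := ∀ v, ‖B v‖ ^ 2 ≤ ⟪B v, v⟫_ℝ





variable {n : ℕ}

@[simp] lemma fst2_mk2 (a b : E n) : fst2 (mk2 a b) = a := rfl
@[simp] lemma snd2_mk2 (a b : E n) : snd2 (mk2 a b) = b := rfl
@[simp] lemma mk2_fst2_snd2 (z : E2 n) : mk2 (fst2 z) (snd2 z) = z := rfl

lemma mk2_ext {z w : E2 n} (h1 : fst2 z = fst2 w) (h2 : snd2 z = snd2 w) : z = w := by
  rw [← mk2_fst2_snd2 z, ← mk2_fst2_snd2 w, h1, h2]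

@[simp] lemma fst2_add (z w : E2 n) : fst2 (z + w) = fst2 z + fst2 w := rfl
@[simp] lemma snd2_add (z w : E2 n) : snd2 (z + w) = snd2 z + snd2 w := rfl
@[simp] lemma fst2_sub (z w : E2 n) : fst2 (z - w) = fst2 z - fst2 w := rfl
@[simp] lemma snd2_sub (z w : E2 n) : snd2 (z - w) = snd2 z - snd2 w := rfl
@[simp] lemma fst2_smul (c : ℝ) (z : E2 n) : fst2 (c • z) = c • fst2 z := rfl
@[simp] lemma snd2_smul (c : ℝ) (z : E2 n) : snd2 (c • z) = c • snd2 z := rfl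
@[simp] lemma fst2_zero : fst2 (0 : E2 n) = 0 := rfl
@[simp] lemma snd2_zero : snd2 (0 : E2 n) = 0 := rfl
@[simp] lemma fst2_neg (z : E2 n) : fst2 (-z) = -fst2 z := rfl
@[simp] lemma snd2_neg (z : E2 n) : snd2 (-z) = -snd2 z := rfl
@[simp] lemma mk2_add (a b c d : E n) : mk2 a b + mk2 c d = mk2 (a + c) (b + d) := rfl

lemma inner_e2 (z w : E2 n) : ⟪z, w⟫_ℝ = ⟪fst2 z, fst2 w⟫_ℝ + ⟪snd2 z, snd2 w⟫_ℝ := rfl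

lemma norm_e2_sq (z : E2 n) : ‖z‖ ^ 2 = ‖fst2 z‖ ^ 2 + ‖snd2 z‖ ^ 2 := by
  have h := inner_e2 z z
  rw [real_inner_self_eq_norm_sq, real_inner_self_eq_norm_sq, real_inner_self_eq_norm_sq] at h
  exact h

/-- `fst2` as a continuous linear map. -/
def fst2L (n : ℕ) : E2 n →L[ℝ] E n :=
  { toLinearMap := LinearMap.fst ℝ (E n) (E n) ∘ₗ (lp2 n).toLinearMap
    cont := continuous_fst.comp (WithLp.prod_continuous_ofLp 2 (E n) (E n)) }

/-- `snd2` as a continuous linear map. -/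
def snd2L (n : ℕ) : E2 n →L[ℝ] E n :=
  { toLinearMap := LinearMap.snd ℝ (E n) (E n) ∘ₗ (lp2 n).toLinearMap
    cont := continuous_snd.comp (WithLp.prod_continuous_ofLp 2 (E n) (E n)) }

@[simp] lemma fst2L_apply (z : E2 n) : fst2L n z = fst2 z := rfl
@[simp] lemma snd2L_apply (z : E2 n) : snd2L n z = snd2 z := rfl

lemma continuous_fst2 : Continuous (fst2 : E2 n → E n) := (fst2L n).continuous
lemma continuous_snd2 : Continuous (snd2 : E2 n → E n) := (snd2L n).continuous

/-- `mk2` as a continuous linear map. -/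
def mk2L (n : ℕ) : E n × E n →L[ℝ] E2 n :=
  { toLinearMap := (lp2 n).symm.toLinearMap
    cont := WithLp.prod_continuous_toLp 2 (E n) (E n) }

@[simp] lemma mk2L_apply (a b : E n) : mk2L n (a, b) = mk2 a b := rfl

lemma continuous_mk2 {α : Type*} [TopologicalSpace α] {f g : α → E n}
    (hf : Continuous f) (hg : Continuous g) : Continuous (fun x => mk2 (f x) (g x)) :=
  (mk2L n).continuous.comp (hf.prodMk hg)

lemma tendsto_mk2 {f g : ℕ → E n} {a b : E n} (hf : Tendsto f atTop (𝓝 a))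
    (hg : Tendsto g atTop (𝓝 b)) :
    Tendsto (fun k => mk2 (f k) (g k)) atTop (𝓝 (mk2 a b)) :=
  ((mk2L n).continuous.tendsto _).comp (hf.prodMk_nhds hg)

lemma norm_fst2_le (z : E2 n) : ‖fst2 z‖ ≤ ‖z‖ := by
  have h := norm_e2_sq z
  nlinarith [norm_nonneg (fst2 z), norm_nonneg (snd2 z), norm_nonneg z, sq_nonneg (‖snd2 z‖)]

lemma norm_snd2_le (z : E2 n) : ‖snd2 z‖ ≤ ‖z‖ := by
  have h := norm_e2_sq z
  nlinarith [norm_nonneg (fst2 z), norm_nonneg (snd2 z), norm_nonneg z]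

lemma norm_mk2_le (a b : E n) : ‖mk2 a b‖ ≤ ‖a‖ + ‖b‖ := by
  have h := norm_e2_sq (mk2 a b)
  simp only [fst2_mk2, snd2_mk2] at h
  nlinarith [norm_nonneg (mk2 a b), norm_nonneg a, norm_nonneg b, mul_nonneg (norm_nonneg a) (norm_nonneg b)]


/-! ### Tangent cone basics -/

lemma tcone_inter_open {H : Type*} [NormedAddCommGroup H] [NormedSpace ℝ H]
    {A O : Set H} {z : H} (hO : IsOpen O) (hz : z ∈ O) :
    tcone A z = tcone (A ∩ O) z := by
  ext w
  constructor
  · rintro ⟨t, wk, ht, ht0, hwk, hmem⟩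
    have hzlim : Tendsto (fun k => z + t k • wk k) atTop (𝓝 z) := by
      have : Tendsto (fun k => t k • wk k) atTop (𝓝 ((0 : ℝ) • w)) := ht0.smul hwk
      rw [zero_smul] at this
      simpa using tendsto_const_nhds.add this
    obtain ⟨K, hK⟩ := (hzlim.eventually (hO.mem_nhds hz)).exists_forall_of_atTop
    refine ⟨fun k => t (k + K), fun k => wk (k + K), fun k => ht _,
      ht0.comp (tendsto_add_atTop_nat K), hwk.comp (tendsto_add_atTop_nat K),
      fun k => ⟨hmem _, hK _ (Nat.le_add_left K k)⟩⟩
  · rintro ⟨t, wk, ht, ht0, hwk, hmem⟩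
    exact ⟨t, wk, ht, ht0, hwk, fun k => (hmem k).1⟩

/-! ### The subspace `rge(B, I - B)` -/

/-- The linear map `p ↦ (B p, p - B p)`. -/
def mkB (B : E n →L[ℝ] E n) : E n →ₗ[ℝ] E2 n :=
  (lp2 n).symm.toLinearMap.comp (LinearMap.prod B.toLinearMap (LinearMap.id - B.toLinearMap))

@[simp] lemma mkB_apply (B : E n →L[ℝ] E n) (p : E n) : mkB B p = mk2 (B p) (p - B p) := rfl

/-- The subspace `{(B p, p - B p) : p}`. -/
def MB (B : E n →L[ℝ] E n) : Submodule ℝ (E2 n) := LinearMap.range (mkB B)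

lemma MB_coe (B : E n →L[ℝ] E n) :
    (MB B : Set (E2 n)) = {w | ∃ p : E n, w = mk2 (B p) (p - B p)} := by
  ext w
  simp only [MB, SetLike.mem_coe, LinearMap.mem_range, mkB_apply, Set.mem_setOf_eq]
  exact ⟨fun ⟨p, h⟩ => ⟨p, h.symm⟩, fun ⟨p, h⟩ => ⟨p, h.symm⟩⟩

lemma q_mem_MB {B : E n →L[ℝ] E n} {w : E2 n} (hw : w ∈ MB B) :
    fst2 w = B (fst2 w + snd2 w) ∧ w = mk2 (B (fst2 w + snd2 w)) ((fst2 w + snd2 w) - B (fst2 w + snd2 w)) := by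
  obtain ⟨p, hp⟩ := hw
  have hp' : w = mk2 (B p) (p - B p) := hp.symm
  have hq : fst2 w + snd2 w = p := by rw [hp']; simp
  constructor
  · rw [hq, hp']; simp
  · rw [hq]; exact hp'

lemma mkB_injective (B : E n →L[ℝ] E n) : Function.Injective (mkB B) := by
  intro p q h
  have := congrArg (fun w => fst2 w + snd2 w) h
  simpa using this

lemma finrank_MB (B : E n →L[ℝ] E n) : Module.finrank ℝ (MB B) = n := by
  rw [MB, LinearMap.finrank_range_of_inj (mkB_injective B)]
  simp [finrank_euclideanSpace_fin]

lemma norm_le_one_of_firm {B : E n →L[ℝ] E n} (hB : FirmNonexp B) : ‖B‖ ≤ 1 := by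
  refine B.opNorm_le_bound zero_le_one (fun v => ?_)
  rcases eq_or_ne (B v) 0 with h | h
  · simp [h, norm_nonneg]
  · have h1 := hB v
    have h2 : ⟪B v, v⟫_ℝ ≤ ‖B v‖ * ‖v‖ := real_inner_le_norm _ _
    have h3 : (0 : ℝ) < ‖B v‖ := norm_pos_iff.mpr h
    nlinarith
/-! ### The transformation `Φ` and its inverse as continuous linear maps -/

/-- `q z = fst2 z + snd2 z`, the map `(x, y) ↦ x + y`. -/
def qL (n : ℕ) : E2 n →L[ℝ] E n := fst2L n + snd2L n

@[simp] lemma qL_apply (z : E2 n) : qL n z = fst2 z + snd2 z := rfl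

/-- `Φ(x,y) = (x+y, x)` as a continuous linear map. -/
def PhiC (n : ℕ) : E2 n →L[ℝ] E2 n :=
  (mk2L n).comp ((qL n).prod (fst2L n))

@[simp] lemma PhiC_apply (z : E2 n) : PhiC n z = mk2 (fst2 z + snd2 z) (fst2 z) := rfl

/-- `Ψ(u,v) = (v, u - v)` as a continuous linear map. -/
def PsiC (n : ℕ) : E2 n →L[ℝ] E2 n :=
  (mk2L n).comp ((snd2L n).prod (fst2L n - snd2L n))

@[simp] lemma PsiC_apply (z : E2 n) : PsiC n z = mk2 (snd2 z) (fst2 z - snd2 z) := rfl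

lemma Psi_Phi (z : E2 n) : PsiC n (PhiC n z) = z := by
  apply mk2_ext <;> simp

lemma Phi_Psi (z : E2 n) : PhiC n (PsiC n z) = z := by
  apply mk2_ext <;> simp

lemma Phi_image_eq_preimage (W : Set (E2 n)) : (PhiC n) '' W = (PsiC n) ⁻¹' W := by
  ext z
  constructor
  · rintro ⟨w, hw, rfl⟩; rwa [Set.mem_preimage, Psi_Phi]
  · intro hz; exact ⟨PsiC n z, hz, Phi_Psi z⟩

@[simp] lemma Sneg_apply (z : E2 n) : Sneg n z = mk2 (-snd2 z) (fst2 z) := rfl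

/-! ### Subspaces with the firm nonexpansiveness property are of the form `MB B` -/

lemma subspace_firm_eq_MB {L : Submodule ℝ (E2 n)} (hrank : Module.finrank ℝ L = n)
    (hfirm : ∀ w ∈ L, ‖fst2 w‖ ^ 2 ≤ ⟪fst2 w, fst2 w + snd2 w⟫_ℝ) :
    ∃ B : E n →L[ℝ] E n, FirmNonexp B ∧ (L : Set (E2 n)) = (MB B : Set (E2 n)) := by
  set qR : L →ₗ[ℝ] E n := (qL n).toLinearMap.comp L.subtype with hqR
  have hinj : Function.Injective qR := by
    intro w w' h
    have h0 : qR (w - w') = 0 := by rw [map_sub, h, sub_self]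
    have h0' : fst2 ((w : E2 n) - (w' : E2 n)) + snd2 ((w : E2 n) - (w' : E2 n)) = 0 := h0
    have hf := hfirm ((w : E2 n) - (w' : E2 n)) (by exact Submodule.sub_mem L w.2 w'.2)
    rw [h0'] at hf
    simp only [inner_zero_right] at hf
    have h1 : fst2 ((w : E2 n) - (w' : E2 n)) = 0 := by
      have := norm_nonneg (fst2 ((w : E2 n) - (w' : E2 n)))
      have hsq : ‖fst2 ((w : E2 n) - (w' : E2 n))‖ = 0 := by nlinarith
      exact norm_eq_zero.mp hsq
    have h2 : snd2 ((w : E2 n) - (w' : E2 n)) = 0 := by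
      have := h0'
      rw [h1, zero_add] at this
      exact this
    have : (w : E2 n) - (w' : E2 n) = 0 := by
      apply mk2_ext <;> simp [h1, h2]
    exact Subtype.ext (sub_eq_zero.mp this)
  have hfr : Module.finrank ℝ L = Module.finrank ℝ (E n) := by
    rw [hrank, finrank_euclideanSpace_fin]
  have hsurj : Function.Surjective qR :=
    (LinearMap.injective_iff_surjective_of_finrank_eq_finrank hfr).mp hinj
  set e : L ≃ₗ[ℝ] E n := LinearEquiv.ofBijective qR ⟨hinj, hsurj⟩ with he
  set Blin : E n →ₗ[ℝ] E n := (fst2L n).toLinearMap.comp (L.subtype.comp (e.symm : E n →ₗ[ℝ] L)) with hBlin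
  set B : E n →L[ℝ] E n := Blin.toContinuousLinearMap with hB
  have hBapp : ∀ p, B p = fst2 ((e.symm p : L) : E2 n) := fun p => rfl
  have hqe : ∀ p : E n, fst2 ((e.symm p : L) : E2 n) + snd2 ((e.symm p : L) : E2 n) = p := by
    intro p
    have : qR (e.symm p) = p := e.apply_symm_apply p
    exact this
  have hrep : ∀ p : E n, ((e.symm p : L) : E2 n) = mk2 (B p) (p - B p) := by
    intro p
    apply mk2_ext
    · simp [hBapp]
    · rw [snd2_mk2, hBapp, eq_sub_iff_add_eq, add_comm]
      exact hqe p
  refine ⟨B, ?_, ?_⟩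
  · intro v
    have hf := hfirm ((e.symm v : L) : E2 n) (e.symm v : L).2
    rw [hqe v, ← hBapp v] at hf
    exact hf
  · ext w
    rw [MB_coe]
    constructor
    · intro hw
      refine ⟨fst2 w + snd2 w, ?_⟩
      have hqw : qR ⟨w, hw⟩ = fst2 w + snd2 w := rfl
      have : e.symm (fst2 w + snd2 w) = ⟨w, hw⟩ := by
        rw [← hqw]; exact e.symm_apply_apply _
      rw [← hrep]
      rw [this]
    · rintro ⟨p, rfl⟩
      rw [← hrep]
      exact ((e.symm p : L)).2

/-! ### The adjoint subspace of `MB B` -/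

lemma inner_MB_elt (B : E n →L[ℝ] E n) (p : E n) (w : E2 n) :
    ⟪mk2 (B p) (p - B p), w⟫_ℝ
      = ⟪p, ContinuousLinearMap.adjoint B (fst2 w - snd2 w) + snd2 w⟫_ℝ := by
  rw [inner_e2]
  simp only [fst2_mk2, snd2_mk2]
  rw [map_sub, inner_add_right, inner_sub_right, ContinuousLinearMap.adjoint_inner_right,
    ContinuousLinearMap.adjoint_inner_right, inner_sub_left]
  ring

lemma mem_MB_orthogonal_iff (B : E n →L[ℝ] E n) (w : E2 n) :
    w ∈ (MB B)ᗮ ↔ ContinuousLinearMap.adjoint B (fst2 w - snd2 w) = -snd2 w := by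
  rw [Submodule.mem_orthogonal]
  constructor
  · intro h
    have key : ∀ p : E n, ⟪p, ContinuousLinearMap.adjoint B (fst2 w - snd2 w) + snd2 w⟫_ℝ = 0 := by
      intro p
      rw [← inner_MB_elt]
      exact h _ (by rw [← SetLike.mem_coe, MB_coe]; exact ⟨p, rfl⟩)
    have h0 := key (ContinuousLinearMap.adjoint B (fst2 w - snd2 w) + snd2 w)
    rw [inner_self_eq_zero] at h0
    exact eq_neg_of_add_eq_zero_left h0
  · intro h u hu
    rw [← SetLike.mem_coe, MB_coe] at hu
    obtain ⟨p, rfl⟩ := hu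
    rw [inner_MB_elt, h]
    simp

lemma adjS_MB (B : E n →L[ℝ] E n) {L : Submodule ℝ (E2 n)}
    (hL : (L : Set (E2 n)) = (MB B : Set (E2 n))) :
    (adjS L : Set (E2 n)) = {w | ∃ p : E n,
      w = mk2 (ContinuousLinearMap.adjoint B p) (p - ContinuousLinearMap.adjoint B p)} := by
  have hL' : L = MB B := SetLike.coe_injective hL
  subst hL'
  ext w'
  rw [SetLike.mem_coe, adjS, Submodule.mem_map]
  constructor
  · rintro ⟨w, hw, rfl⟩
    rw [mem_MB_orthogonal_iff] at hw
    refine ⟨fst2 w - snd2 w, ?_⟩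
    have h1 : (Sneg n).toLinearMap w = Sneg n w := rfl
    rw [h1]
    apply mk2_ext
    · simp [hw]
    · simp only [Sneg_apply, snd2_mk2, hw]
      abel
  · rintro ⟨p, rfl⟩
    refine ⟨mk2 (p - ContinuousLinearMap.adjoint B p) (-(ContinuousLinearMap.adjoint B p)), ?_, ?_⟩
    · rw [mem_MB_orthogonal_iff]
      simp only [fst2_mk2, snd2_mk2, neg_neg, sub_neg_eq_add, sub_add_cancel]
    · apply mk2_ext <;> simp
/-! ### Finite Kirszbraun-type ball intersection lemma -/

set_option maxHeartbeats 1000000 in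
lemma finite_kirszbraun {ι : Type*} (s : Finset ι) (uu nn : ι → E n)
    (hpair : ∀ i ∈ s, ∀ j ∈ s, ‖nn i - nn j‖ ≤ ‖uu i - uu j‖) (u : E n) :
    ∃ y : E n, ∀ i ∈ s, ‖y - nn i‖ ≤ ‖u - uu i‖ := by
  classical
  rcases s.eq_empty_or_nonempty with rfl | hs
  · exact ⟨0, by simp⟩
  by_cases hex : ∃ i ∈ s, u = uu i
  · obtain ⟨i₀, hi₀, rfl⟩ := hex
    exact ⟨nn i₀, fun i hi => hpair i₀ hi₀ i hi⟩
  push_neg at hex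
  have hr : ∀ i ∈ s, 0 < ‖u - uu i‖ := fun i hi =>
    norm_pos_iff.mpr (sub_ne_zero.mpr (hex i hi))
  -- the function to minimize
  set lam : E n → ℝ := fun y => s.sup' hs (fun i => ‖y - nn i‖ ^ 2 / ‖u - uu i‖ ^ 2) with hlam
  have hlam_cont : Continuous lam := by
    rw [continuous_iff_continuousAt]
    intro y
    apply ContinuousAt.finset_sup'_apply hs
    intro i _
    exact (((continuous_id.sub continuous_const).norm.pow 2).div_const _).continuousAt
  have hlam_ge : ∀ y, ∀ i ∈ s, ‖y - nn i‖ ^ 2 / ‖u - uu i‖ ^ 2 ≤ lam y := by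
    intro y i hi
    exact Finset.le_sup' (fun i => ‖y - nn i‖ ^ 2 / ‖u - uu i‖ ^ 2) hi
  obtain ⟨i₁, hi₁⟩ := id hs
  have hC0 : 0 ≤ lam (nn i₁) := by
    have := hlam_ge (nn i₁) i₁ hi₁
    have h1 : (0:ℝ) ≤ ‖nn i₁ - nn i₁‖ ^ 2 / ‖u - uu i₁‖ ^ 2 := by positivity
    linarith
  set R : ℝ := ‖u - uu i₁‖ * Real.sqrt (lam (nn i₁)) + 1 with hR
  have hRpos : 0 < R := by
    have h1 : 0 ≤ ‖u - uu i₁‖ * Real.sqrt (lam (nn i₁)) := by positivity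
    linarith
  -- outside the ball K = closedBall (nn i₁) R, lam y > lam (nn i₁)
  have houtside : ∀ y : E n, y ∉ closedBall (nn i₁) R → lam (nn i₁) < lam y := by
    intro y hy
    rw [mem_closedBall, not_le, dist_eq_norm] at hy
    have h1 : ‖u - uu i₁‖ * Real.sqrt (lam (nn i₁)) < ‖y - nn i₁‖ := by
      calc ‖u - uu i₁‖ * Real.sqrt (lam (nn i₁)) < R := by rw [hR]; linarith
      _ < ‖y - nn i₁‖ := hy
    have h2 : lam (nn i₁) < ‖y - nn i₁‖ ^ 2 / ‖u - uu i₁‖ ^ 2 := by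
      rw [lt_div_iff₀ (pow_pos (hr i₁ hi₁) 2)]
      have hs1 : Real.sqrt (lam (nn i₁)) ^ 2 = lam (nn i₁) := Real.sq_sqrt hC0
      nlinarith [hr i₁ hi₁, Real.sqrt_nonneg (lam (nn i₁)), norm_nonneg (y - nn i₁)]
    exact lt_of_lt_of_le h2 (hlam_ge y i₁ hi₁)
  -- minimize lam on the closed ball
  obtain ⟨y₀, hy₀K, hy₀min⟩ := (isCompact_closedBall (nn i₁) R).exists_isMinOn
    ⟨nn i₁, mem_closedBall_self hRpos.le⟩ hlam_cont.continuousOn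
  have hy₀glob : ∀ y : E n, lam y₀ ≤ lam y := by
    intro y
    by_cases hy : y ∈ closedBall (nn i₁) R
    · exact hy₀min hy
    · have h1 := houtside y hy
      have h2 : lam y₀ ≤ lam (nn i₁) := hy₀min (mem_closedBall_self hRpos.le)
      linarith
  set lam0 : ℝ := lam y₀ with hlam0
  by_cases hle : lam0 ≤ 1
  · refine ⟨y₀, fun i hi => ?_⟩
    have h1 := hlam_ge y₀ i hi
    have hpos := hr i hi
    have h2 : ‖y₀ - nn i‖ ^ 2 ≤ ‖u - uu i‖ ^ 2 := by
      have h3 : ‖y₀ - nn i‖ ^ 2 / ‖u - uu i‖ ^ 2 ≤ 1 := le_trans h1 hle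
      rw [div_le_one (pow_pos hpos 2)] at h3
      exact h3
    nlinarith [norm_nonneg (y₀ - nn i), norm_nonneg (u - uu i)]
  exfalso
  push_neg at hle
  -- active set
  set I : Finset ι := s.filter (fun i => ‖y₀ - nn i‖ ^ 2 / ‖u - uu i‖ ^ 2 = lam0) with hI
  have hInonempty : I.Nonempty := by
    obtain ⟨i, hi, hieq⟩ := Finset.exists_mem_eq_sup' hs (fun i => ‖y₀ - nn i‖ ^ 2 / ‖u - uu i‖ ^ 2)
    exact ⟨i, Finset.mem_filter.mpr ⟨hi, hieq.symm⟩⟩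
  have hIactive : ∀ i ∈ I, ‖y₀ - nn i‖ ^ 2 = lam0 * ‖u - uu i‖ ^ 2 := by
    intro i hi
    obtain ⟨his, heq⟩ := Finset.mem_filter.mp hi
    have hpos := hr i his
    rw [div_eq_iff (pow_pos hpos 2).ne'] at heq
    linarith [heq]
  have hIsub : ∀ i ∈ I, i ∈ s := fun i hi => (Finset.mem_filter.mp hi).1
  -- y₀ is in the convex hull of the active points
  set T : Finset (E n) := I.image nn with hT
  have hTne : T.Nonempty := hInonempty.image nn
  have hhull : y₀ ∈ convexHull ℝ (T : Set (E n)) := by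
    by_contra hnot
    obtain ⟨fdual, c, hc1, hc2⟩ := geometric_hahn_banach_point_closed
      (convex_convexHull ℝ _) ((T.finite_toSet.isClosed_convexHull ℝ)) hnot
    set d : E n := (InnerProductSpace.toDual ℝ (E n)).symm fdual with hd
    have hdual : ∀ v : E n, ⟪d, v⟫_ℝ = fdual v := fun v => by
      rw [hd]
      exact InnerProductSpace.toDual_symm_apply
    set eps : ℝ := c - fdual y₀ with heps
    have hepspos : 0 < eps := sub_pos.mpr hc1
    have hdb : ∀ b ∈ T, eps ≤ ⟪d, b - y₀⟫_ℝ := by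
      intro b hb
      have h1 : c < fdual b := hc2 b (subset_convexHull ℝ _ hb)
      rw [hdual (b - y₀), map_sub]
      rw [heps]; linarith
    -- eventually in t > 0, lam (y₀ + t • d) < lam0
    have hev : ∀ᶠ t in 𝓝[>] (0:ℝ), lam (y₀ + t • d) < lam0 := by
      have hall : ∀ i ∈ s, ∀ᶠ t in 𝓝[>] (0:ℝ),
          ‖y₀ + t • d - nn i‖ ^ 2 / ‖u - uu i‖ ^ 2 < lam0 := by
        intro i hi
        by_cases hact : i ∈ I
        · -- active index
          have hbT : nn i ∈ T := Finset.mem_image_of_mem nn hact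
          have hinner : ⟪y₀ - nn i, d⟫_ℝ ≤ -eps := by
            have h1 := hdb (nn i) hbT
            have h2 : ⟪d, nn i - y₀⟫_ℝ = -⟪y₀ - nn i, d⟫_ℝ := by
              rw [real_inner_comm, show nn i - y₀ = -(y₀ - nn i) by abel, inner_neg_left]
            rw [h2] at h1
            linarith
          have hcont : Tendsto (fun t : ℝ => 2 * ⟪y₀ - nn i, d⟫_ℝ + t * ‖d‖ ^ 2)
              (𝓝[>] 0) (𝓝 (2 * ⟪y₀ - nn i, d⟫_ℝ)) := by
            have : Tendsto (fun t : ℝ => 2 * ⟪y₀ - nn i, d⟫_ℝ + t * ‖d‖ ^ 2)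
                (𝓝 0) (𝓝 (2 * ⟪y₀ - nn i, d⟫_ℝ + 0 * ‖d‖ ^ 2)) := by
              apply Tendsto.add tendsto_const_nhds
              exact (continuous_id.mul continuous_const).tendsto 0
            rw [zero_mul, add_zero] at this
            exact this.mono_left nhdsWithin_le_nhds
          have hneg : ∀ᶠ t in 𝓝[>] (0:ℝ), 2 * ⟪y₀ - nn i, d⟫_ℝ + t * ‖d‖ ^ 2 < 0 := by
            apply hcont.eventually_lt_const
            linarith
          filter_upwards [hneg, self_mem_nhdsWithin] with t hneg2 ht
          have ht' : (0:ℝ) < t := ht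
          have hexpand : ‖y₀ + t • d - nn i‖ ^ 2
              = ‖y₀ - nn i‖ ^ 2 + t * (2 * ⟪y₀ - nn i, d⟫_ℝ + t * ‖d‖ ^ 2) := by
            have h3 : y₀ + t • d - nn i = (y₀ - nn i) + t • d := by abel
            rw [h3, norm_add_sq_real, real_inner_smul_right, norm_smul]
            simp only [Real.norm_eq_abs]
            rw [mul_pow, sq_abs]
            ring
          have hlt : ‖y₀ + t • d - nn i‖ ^ 2 < ‖y₀ - nn i‖ ^ 2 := by
            rw [hexpand]
            nlinarith
          have hact' : ‖y₀ - nn i‖ ^ 2 / ‖u - uu i‖ ^ 2 = lam0 :=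
            (Finset.mem_filter.mp hact).2
          rw [← hact']
          have hposr := pow_pos (hr i hi) 2
          gcongr
        · -- inactive index
          have hlt0 : ‖y₀ - nn i‖ ^ 2 / ‖u - uu i‖ ^ 2 < lam0 := by
            rcases lt_or_eq_of_le (hlam_ge y₀ i hi) with h | h
            · exact h
            · exact absurd (Finset.mem_filter.mpr ⟨hi, h⟩) hact
          have hcont : Tendsto (fun t : ℝ => ‖y₀ + t • d - nn i‖ ^ 2 / ‖u - uu i‖ ^ 2)
              (𝓝[>] 0) (𝓝 (‖y₀ + (0:ℝ) • d - nn i‖ ^ 2 / ‖u - uu i‖ ^ 2)) := by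
            apply Tendsto.mono_left ?_ nhdsWithin_le_nhds
            apply Continuous.tendsto
            exact (((continuous_const.add (continuous_id.smul continuous_const)).sub
              continuous_const).norm.pow 2).div_const _
          rw [zero_smul, add_zero] at hcont
          exact hcont.eventually_lt_const hlt0
      rw [← Finset.eventually_all] at hall
      filter_upwards [hall] with t hall2
      rw [hlam]
      exact (Finset.sup'_lt_iff hs).mpr hall2
    obtain ⟨t, hlt⟩ := hev.exists
    exact absurd (hy₀glob (y₀ + t • d)) (not_le.mpr hlt)
  -- now use the convex combination to derive a contradiction
  rw [Finset.convexHull_eq] at hhull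
  obtain ⟨w, hw0, hw1, hwy⟩ := hhull
  rw [Finset.centerMass_eq_of_sum_1 _ _ hw1] at hwy
  -- representative active index for each point of T
  have hrepex : ∀ b ∈ T, ∃ i, i ∈ I ∧ nn i = b := by
    intro b hb
    obtain ⟨i, hi, hieq⟩ := Finset.mem_image.mp hb
    exact ⟨i, hi, hieq⟩
  classical
  set rep : E n → ι := fun b => if h : ∃ i, i ∈ I ∧ nn i = b then h.choose else i₁ with hrep
  have hrepspec : ∀ b ∈ T, rep b ∈ I ∧ nn (rep b) = b := by
    intro b hb
    have h := hrepex b hb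
    simp only [hrep, dif_pos h]
    exact h.choose_spec
  have hrepI : ∀ b ∈ T, rep b ∈ I := fun b hb => (hrepspec b hb).1
  have hrepnn : ∀ b ∈ T, nn (rep b) = b := fun b hb => (hrepspec b hb).2
  set v : E n → E n := fun b => u - uu (rep b) with hv
  have hvpos : ∀ b ∈ T, 0 < ‖v b‖ := fun b hb => hr _ (hIsub _ (hrepI b hb))
  have hby : ∀ b ∈ T, ‖b - y₀‖ ^ 2 = lam0 * ‖v b‖ ^ 2 := by
    intro b hb
    have := hIactive (rep b) (hrepI b hb)
    rw [hrepnn b hb] at this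
    rw [norm_sub_rev]
    exact this
  have hbc : ∀ b ∈ T, ∀ c ∈ T, ‖b - c‖ ≤ ‖v b - v c‖ := by
    intro b hb c hc
    have h1 := hpair (rep b) (hIsub _ (hrepI b hb)) (rep c) (hIsub _ (hrepI c hc))
    rw [hrepnn b hb, hrepnn c hc] at h1
    have h2 : v b - v c = uu (rep c) - uu (rep b) := by simp only [hv]; abel
    rw [h2, norm_sub_rev (uu (rep c)) (uu (rep b))]
    exact h1
  -- key termwise inequality
  have hterm : ∀ b ∈ T, ∀ c ∈ T, ((lam0 - 1) / 2) * (‖v b‖ ^ 2 + ‖v c‖ ^ 2) + ⟪v b, v c⟫_ℝ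
      ≤ ⟪b - y₀, c - y₀⟫_ℝ := by
    intro b hb c hc
    have hpol : ‖(b - y₀) - (c - y₀)‖ ^ 2
        = ‖b - y₀‖ ^ 2 - 2 * ⟪b - y₀, c - y₀⟫_ℝ + ‖c - y₀‖ ^ 2 := norm_sub_sq_real _ _
    have hbceq : (b - y₀) - (c - y₀) = b - c := by abel
    rw [hbceq] at hpol
    have hvexp : ‖v b - v c‖ ^ 2 = ‖v b‖ ^ 2 - 2 * ⟪v b, v c⟫_ℝ + ‖v c‖ ^ 2 :=
      norm_sub_sq_real _ _
    have h1 := hbc b hb c hc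
    have h2 : ‖b - c‖ ^ 2 ≤ ‖v b - v c‖ ^ 2 := pow_le_pow_left₀ (norm_nonneg _) h1 2
    rw [hby b hb, hby c hc] at hpol
    linarith [hpol, hvexp, h2]
  -- the zero sum
  simp only [id_eq] at hwy
  have hzero : ∑ b ∈ T, w b • (b - y₀) = (0 : E n) := by
    have h1 : ∀ b ∈ T, w b • (b - y₀) = w b • b - w b • y₀ := fun b _ => smul_sub _ _ _
    rw [Finset.sum_congr rfl h1, Finset.sum_sub_distrib, ← Finset.sum_smul, hw1, one_smul, hwy,
      sub_self]
  have hdouble : (0:ℝ) = ∑ b ∈ T, ∑ c ∈ T, w b * (w c * ⟪b - y₀, c - y₀⟫_ℝ) := by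
    have h0 : (0:ℝ) = ⟪∑ b ∈ T, w b • (b - y₀), ∑ c ∈ T, w c • (c - y₀)⟫_ℝ := by
      rw [hzero, inner_zero_left]
    rw [h0, sum_inner]
    apply Finset.sum_congr rfl
    intro b _
    rw [real_inner_smul_left, inner_sum, Finset.mul_sum]
    apply Finset.sum_congr rfl
    intro c _
    rw [real_inner_smul_right]
  set QQ : E n := ∑ b ∈ T, w b • v b with hQQ
  have hsq : ‖QQ‖ ^ 2 = ∑ b ∈ T, ∑ c ∈ T, w b * (w c * ⟪v b, v c⟫_ℝ) := by
    rw [← real_inner_self_eq_norm_sq, hQQ, sum_inner]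
    apply Finset.sum_congr rfl
    intro b _
    rw [real_inner_smul_left, inner_sum, Finset.mul_sum]
    apply Finset.sum_congr rfl
    intro c _
    rw [real_inner_smul_right]
  set SS : ℝ := ∑ b ∈ T, w b * ‖v b‖ ^ 2 with hSS
  have hSSpos : 0 < SS := by
    have hex : ∃ b ∈ T, 0 < w b := by
      by_contra hcon
      push_neg at hcon
      have : ∑ b ∈ T, w b = 0 := Finset.sum_eq_zero (fun b hb =>
        le_antisymm (hcon b hb) (hw0 b hb))
      rw [hw1] at this
      exact one_ne_zero this
    obtain ⟨b0, hb0T, hb0⟩ := hex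
    apply Finset.sum_pos'
    · intro b hb
      exact mul_nonneg (hw0 b hb) (sq_nonneg _)
    · exact ⟨b0, hb0T, mul_pos hb0 (pow_pos (hvpos b0 hb0T) 2)⟩
  -- expansion of the double sum of squares
  have hexpand : ∑ b ∈ T, ∑ c ∈ T, w b * (w c * (((lam0 - 1) / 2) * (‖v b‖ ^ 2 + ‖v c‖ ^ 2)))
      = (lam0 - 1) * SS := by
    have h1 : ∀ b ∈ T, ∑ c ∈ T, w b * (w c * (((lam0 - 1) / 2) * (‖v b‖ ^ 2 + ‖v c‖ ^ 2)))
        = w b * (((lam0 - 1) / 2) * ‖v b‖ ^ 2) + w b * (((lam0 - 1) / 2) * SS) := by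
      intro b _
      have : ∀ c ∈ T, w b * (w c * (((lam0 - 1) / 2) * (‖v b‖ ^ 2 + ‖v c‖ ^ 2)))
          = (w b * (((lam0 - 1) / 2) * ‖v b‖ ^ 2)) * w c
            + (w b * ((lam0 - 1) / 2)) * (w c * ‖v c‖ ^ 2) := by
        intro c _
        ring
      rw [Finset.sum_congr rfl this, Finset.sum_add_distrib, ← Finset.mul_sum, ← Finset.mul_sum,
        hw1, mul_one, hSS]
      ring
    rw [Finset.sum_congr rfl h1, Finset.sum_add_distrib]
    have e1 : ∑ b ∈ T, w b * (((lam0 - 1) / 2) * ‖v b‖ ^ 2) = ((lam0 - 1) / 2) * SS := by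
      rw [hSS, Finset.mul_sum]
      exact Finset.sum_congr rfl (fun b _ => by ring)
    have e2 : ∑ b ∈ T, w b * (((lam0 - 1) / 2) * SS) = ((lam0 - 1) / 2) * SS := by
      rw [← Finset.sum_mul, hw1, one_mul]
    rw [e1, e2]
    ring
  have hfinal : (lam0 - 1) * SS + ‖QQ‖ ^ 2 ≤ 0 := by
    have hle2 : ∑ b ∈ T, ∑ c ∈ T,
          w b * (w c * (((lam0 - 1) / 2) * (‖v b‖ ^ 2 + ‖v c‖ ^ 2) + ⟪v b, v c⟫_ℝ))
        ≤ ∑ b ∈ T, ∑ c ∈ T, w b * (w c * ⟪b - y₀, c - y₀⟫_ℝ) := by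
      apply Finset.sum_le_sum
      intro b hb
      apply Finset.sum_le_sum
      intro c hc
      exact mul_le_mul_of_nonneg_left
        (mul_le_mul_of_nonneg_left (hterm b hb c hc) (hw0 c hc)) (hw0 b hb)
    have hsplit : ∑ b ∈ T, ∑ c ∈ T,
          w b * (w c * (((lam0 - 1) / 2) * (‖v b‖ ^ 2 + ‖v c‖ ^ 2) + ⟪v b, v c⟫_ℝ))
        = ∑ b ∈ T, ∑ c ∈ T, w b * (w c * (((lam0 - 1) / 2) * (‖v b‖ ^ 2 + ‖v c‖ ^ 2)))
          + ∑ b ∈ T, ∑ c ∈ T, w b * (w c * ⟪v b, v c⟫_ℝ) := by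
      rw [← Finset.sum_add_distrib]
      apply Finset.sum_congr rfl
      intro b _
      rw [← Finset.sum_add_distrib]
      apply Finset.sum_congr rfl
      intro c _
      ring
    rw [hsplit, hexpand, ← hsq, ← hdouble] at hle2
    exact hle2
  nlinarith [hSSpos, sq_nonneg ‖QQ‖]
/-! ### Minty-type solvability -/

lemma le_of_sq_le_sq'' {a b : ℝ} (h : a ^ 2 ≤ b ^ 2) (ha : 0 ≤ a) (hb : 0 ≤ b) : a ≤ b := by
  nlinarith

lemma ball_to_firm {x y u xw yw : E n} (hy : y = (2 : ℝ) • x - u)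
    (h : ‖y - (xw - yw)‖ ≤ ‖u - (xw + yw)‖) :
    ‖x - xw‖ ^ 2 ≤ ⟪u - (xw + yw), x - xw⟫_ℝ := by
  set a : E n := x - xw with ha
  set h0 : E n := u - (xw + yw) with hh0
  have key : y - (xw - yw) = (2 : ℝ) • a - h0 := by
    rw [hy, ha, hh0]
    module
  rw [key] at h
  have hsq : ‖(2 : ℝ) • a - h0‖ ^ 2 ≤ ‖h0‖ ^ 2 :=
    pow_le_pow_left₀ (norm_nonneg _) h 2
  have hexp : ‖(2 : ℝ) • a - h0‖ ^ 2
      = 4 * ‖a‖ ^ 2 - 4 * ⟪a, h0⟫_ℝ + ‖h0‖ ^ 2 := by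
    rw [norm_sub_sq_real, real_inner_smul_left, norm_smul]
    simp only [Real.norm_eq_abs]
    rw [mul_pow, sq_abs]
    ring
  rw [real_inner_comm]
  linarith [hsq, hexp ▸ hsq, hexp]

lemma minty_core {G : Set (E2 n)}
    (hGmono : ∀ w₁ ∈ G, ∀ w₂ ∈ G, 0 ≤ ⟪snd2 w₁ - snd2 w₂, fst2 w₁ - fst2 w₂⟫_ℝ)
    {w₀ : E2 n} (hw₀ : w₀ ∈ G) (u : E n) :
    ∃ x : E n, ‖x - fst2 w₀‖ ≤ ‖u - (fst2 w₀ + snd2 w₀)‖ ∧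
      ∀ w ∈ G, ‖x - fst2 w‖ ^ 2 ≤ ⟪u - (fst2 w + snd2 w), x - fst2 w⟫_ℝ := by
  classical
  set nnf : G → E n := fun w => fst2 (w : E2 n) - snd2 (w : E2 n) with hnnf
  set uuf : G → E n := fun w => fst2 (w : E2 n) + snd2 (w : E2 n) with huuf
  have hpair : ∀ (i j : G), ‖nnf i - nnf j‖ ≤ ‖uuf i - uuf j‖ := by
    intro i j
    have hm := hGmono (i : E2 n) i.2 (j : E2 n) j.2
    apply le_of_sq_le_sq'' ?_ (norm_nonneg _) (norm_nonneg _)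
    have e1 : ‖nnf i - nnf j‖ ^ 2
        = ‖(fst2 (i : E2 n) - fst2 (j : E2 n)) - (snd2 (i : E2 n) - snd2 (j : E2 n))‖ ^ 2 := by
      congr 1
      congr 1
      rw [hnnf]
      module
    have e2 : ‖uuf i - uuf j‖ ^ 2
        = ‖(fst2 (i : E2 n) - fst2 (j : E2 n)) + (snd2 (i : E2 n) - snd2 (j : E2 n))‖ ^ 2 := by
      congr 1
      congr 1
      rw [huuf]
      module
    rw [e1, e2, norm_sub_sq_real, norm_add_sq_real]
    have := real_inner_comm (fst2 (i : E2 n) - fst2 (j : E2 n))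
      (snd2 (i : E2 n) - snd2 (j : E2 n))
    linarith [hm, this ▸ hm]
  -- the family of closed balls indexed by G
  set t : G → Set (E n) := fun w => closedBall (nnf w) ‖u - uuf w‖ with ht
  have htc : ∀ w : G, IsClosed (t w) := fun w => isClosed_closedBall
  have hFIP : ∀ (fin : Finset G), (t ⟨w₀, hw₀⟩ ∩ ⋂ i ∈ fin, t i).Nonempty := by
    intro fin
    obtain ⟨y, hy⟩ := finite_kirszbraun (insert ⟨w₀, hw₀⟩ fin) uuf nnf
      (fun i _ j _ => hpair i j) u
    refine ⟨y, ?_, ?_⟩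
    · have := hy ⟨w₀, hw₀⟩ (Finset.mem_insert_self _ _)
      rw [ht, mem_closedBall_iff_norm]
      exact this
    · rw [Set.mem_iInter₂]
      intro i hi
      have := hy i (Finset.mem_insert_of_mem hi)
      rw [ht, mem_closedBall_iff_norm]
      exact this
  obtain ⟨y, hy1, hy2⟩ := (isCompact_closedBall _ _).inter_iInter_nonempty t htc hFIP
  have hyall : ∀ w : G, ‖y - nnf w‖ ≤ ‖u - uuf w‖ := by
    intro w
    have := Set.mem_iInter.mp hy2 w
    rwa [ht, mem_closedBall_iff_norm] at this
  set x : E n := (2⁻¹ : ℝ) • (u + y) with hx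
  have hyx : y = (2 : ℝ) • x - u := by
    rw [hx]
    module
  have hfirm : ∀ w ∈ G, ‖x - fst2 w‖ ^ 2 ≤ ⟪u - (fst2 w + snd2 w), x - fst2 w⟫_ℝ := by
    intro w hw
    exact ball_to_firm hyx (hyall ⟨w, hw⟩)
  refine ⟨x, ?_, hfirm⟩
  have h1 := hfirm w₀ hw₀
  have h2 := real_inner_le_norm (u - (fst2 w₀ + snd2 w₀)) (x - fst2 w₀)
  rcases eq_or_lt_of_le (norm_nonneg (x - fst2 w₀)) with h3 | h3
  · rw [← h3]
    exact norm_nonneg _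
  · nlinarith
/-! ### The local single-valued Lipschitz localization -/

set_option maxHeartbeats 1000000 in
lemma local_graph (F : E n → Set (E n)) (zb : E2 n) (hzb : zb ∈ gph F)
    (hmono : LocMaxMonoAt F zb) :
    ∃ (U : Set (E n)) (f : E n → E n) (W : Set (E2 n)),
      IsOpen U ∧ (fst2 zb + snd2 zb) ∈ U ∧ IsOpen W ∧ zb ∈ W ∧
      LipschitzOnWith 1 f U ∧
      (∀ u ∈ U, ∀ u' ∈ U, ‖f u - f u'‖ ^ 2 ≤ ⟪f u - f u', u - u'⟫_ℝ) ∧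
      gph F ∩ W = {w | (fst2 w + snd2 w) ∈ U ∧ fst2 w = f (fst2 w + snd2 w)} := by
  classical
  obtain ⟨X, Y, hX, hY, hxX, hyY, hmon, hmax⟩ := hmono
  set G : Set (E2 n) := gph F ∩ {w | fst2 w ∈ X ∧ snd2 w ∈ Y} with hG
  have hzbG : zb ∈ G := ⟨hzb, hxX, hyY⟩
  have hGmono : ∀ w₁ ∈ G, ∀ w₂ ∈ G, 0 ≤ ⟪snd2 w₁ - snd2 w₂, fst2 w₁ - fst2 w₂⟫_ℝ := by
    intro w₁ h₁ w₂ h₂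
    exact hmon w₁ ⟨h₁.1, h₁.2⟩ w₂ ⟨h₂.1, h₂.2⟩
  obtain ⟨δ₁, hδ₁pos, hδ₁⟩ := Metric.isOpen_iff.mp hX (fst2 zb) hxX
  obtain ⟨δ₂, hδ₂pos, hδ₂⟩ := Metric.isOpen_iff.mp hY (snd2 zb) hyY
  set δ : ℝ := min δ₁ (δ₂ / 2) with hδ
  have hδpos : 0 < δ := lt_min hδ₁pos (by linarith)
  set ub : E n := fst2 zb + snd2 zb with hub
  set U : Set (E n) := ball ub δ with hU
  -- key existence: every u ∈ U is the "sum" of a point of G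
  have hEx : ∀ u ∈ U, mk2 (u) (0) = mk2 u 0 := fun _ _ => rfl
  have hexist : ∀ u ∈ U, ∃ w ∈ G, fst2 w + snd2 w = u := by
    intro u hu
    have hnorm : ‖u - ub‖ < δ := by rwa [hU, mem_ball, dist_eq_norm] at hu
    obtain ⟨x, hx1, hx2⟩ := minty_core hGmono hzbG u
    have hxX' : x ∈ X := by
      apply hδ₁
      rw [mem_ball, dist_eq_norm]
      calc ‖x - fst2 zb‖ ≤ ‖u - ub‖ := hx1
        _ < δ := hnorm
        _ ≤ δ₁ := min_le_left _ _
    have hyY' : u - x ∈ Y := by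
      apply hδ₂
      rw [mem_ball, dist_eq_norm]
      have h1 : u - x - snd2 zb = (u - ub) + (fst2 zb - x) := by
        rw [hub]; module
      rw [h1]
      calc ‖(u - ub) + (fst2 zb - x)‖ ≤ ‖u - ub‖ + ‖fst2 zb - x‖ := norm_add_le _ _
        _ = ‖u - ub‖ + ‖x - fst2 zb‖ := by rw [norm_sub_rev (fst2 zb) x]
        _ ≤ ‖u - ub‖ + ‖u - ub‖ := by linarith [hx1]
        _ < 2 * δ := by linarith [hnorm]
        _ ≤ δ₂ := by
            have := min_le_right δ₁ (δ₂ / 2)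
            have hδle : δ ≤ δ₂ / 2 := this
            linarith
    -- apply maximality to the extension by (x, u - x)
    set T : E n → Set (E n) := fun a => {b | mk2 a b ∈ G ∨ (a = x ∧ b = u - x)} with hT
    have hTmono : MonoMap T := by
      intro x₁ y₁ x₂ y₂ h₁ h₂
      rcases h₁ with h₁ | ⟨ha1, hb1⟩ <;> rcases h₂ with h₂ | ⟨ha2, hb2⟩
      · have := hGmono (mk2 x₁ y₁) h₁ (mk2 x₂ y₂) h₂
        simpa using this
      · -- (x₂, y₂) = (x, u - x), (x₁, y₁) ∈ G
        rw [ha2, hb2]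
        have hf := hx2 (mk2 x₁ y₁) h₁
        simp only [fst2_mk2, snd2_mk2] at hf
        have key : ⟪y₁ - (u - x), x₁ - x⟫_ℝ
            = ⟪u - (x₁ + y₁), x - x₁⟫_ℝ - ‖x - x₁‖ ^ 2 := by
          rw [← real_inner_self_eq_norm_sq]
          have h3 : y₁ - (u - x) = -((u - (x₁ + y₁)) - (x - x₁)) := by module
          have h4 : x₁ - x = -(x - x₁) := by module
          rw [h3, h4, inner_neg_neg, inner_sub_left]
        rw [key]
        linarith [hf]
      · rw [ha1, hb1]
        have hf := hx2 (mk2 x₂ y₂) h₂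
        simp only [fst2_mk2, snd2_mk2] at hf
        have key : ⟪(u - x) - y₂, x - x₂⟫_ℝ
            = ⟪u - (x₂ + y₂), x - x₂⟫_ℝ - ‖x - x₂‖ ^ 2 := by
          rw [← real_inner_self_eq_norm_sq]
          have h3 : (u - x) - y₂ = (u - (x₂ + y₂)) - (x - x₂) := by module
          rw [h3, inner_sub_left]
        rw [key]
        linarith [hf]
      · rw [ha1, hb1, ha2, hb2]
        simp
    have hsub : G ⊆ gph T := by
      intro w hw
      have : mk2 (fst2 w) (snd2 w) ∈ G := by rwa [mk2_fst2_snd2]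
      exact Or.inl this
    have heq := hmax T hTmono (by
      intro w hw
      exact hsub ⟨hw.1, hw.2⟩)
    have hmemT : mk2 x (u - x) ∈ gph T ∩ {w | fst2 w ∈ X ∧ snd2 w ∈ Y} := by
      refine ⟨?_, by simpa using hxX', by simpa using hyY'⟩
      show (u - x) ∈ T x
      exact Or.inr ⟨rfl, rfl⟩
    rw [← heq] at hmemT
    exact ⟨mk2 x (u - x), ⟨hmemT.1, hmemT.2⟩, by simp⟩
  -- uniqueness of the G-point with a given sum
  have huniq : ∀ w ∈ G, ∀ w' ∈ G, fst2 w + snd2 w = fst2 w' + snd2 w' → w = w' := by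
    intro w hw w' hw' hq
    have hm := hGmono w hw w' hw'
    have hy : snd2 w - snd2 w' = -(fst2 w - fst2 w') := by
      have := sub_eq_zero.mpr hq
      have h2 : (fst2 w - fst2 w') + (snd2 w - snd2 w') = 0 := by
        rw [← this]; module
      linear_combination (norm := module) h2
    rw [hy, inner_neg_left, real_inner_self_eq_norm_sq] at hm
    have hx0 : fst2 w = fst2 w' := by
      have : ‖fst2 w - fst2 w'‖ = 0 := by nlinarith [norm_nonneg (fst2 w - fst2 w')]
      have := norm_eq_zero.mp this
      exact sub_eq_zero.mp this
    have hy0 : snd2 w = snd2 w' := by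
      have h3 := hq
      rw [hx0] at h3
      exact add_left_cancel h3
    exact mk2_ext hx0 hy0
  -- the localization function
  set f : E n → E n := fun u =>
    if h : ∃ w ∈ G, fst2 w + snd2 w = u then fst2 h.choose else 0 with hf
  have hfspec : ∀ u, (h : ∃ w ∈ G, fst2 w + snd2 w = u) →
      mk2 (f u) (u - f u) ∈ G ∧ fst2 (mk2 (f u) (u - f u)) + snd2 (mk2 (f u) (u - f u)) = u := by
    intro u h
    obtain ⟨hwG, hwq⟩ := h.choose_spec
    have hfu : f u = fst2 h.choose := by
      rw [hf]
      simp only [dif_pos h]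
    have : mk2 (f u) (u - f u) = h.choose := by
      apply mk2_ext
      · simp [hfu]
      · simp only [snd2_mk2, hfu]
        rw [sub_eq_iff_eq_add']
        exact hwq.symm
    rw [this]
    exact ⟨hwG, hwq⟩
  have hfeq : ∀ w ∈ G, f (fst2 w + snd2 w) = fst2 w := by
    intro w hw
    have h : ∃ w' ∈ G, fst2 w' + snd2 w' = fst2 w + snd2 w := ⟨w, hw, rfl⟩
    obtain ⟨hmem, hq⟩ := hfspec _ h
    have := huniq _ hmem _ hw (by simpa using hq)
    have := congrArg fst2 this
    simpa using this
  -- firmness of f on U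
  have hfirm : ∀ u ∈ U, ∀ u' ∈ U, ‖f u - f u'‖ ^ 2 ≤ ⟪f u - f u', u - u'⟫_ℝ := by
    intro u hu u' hu'
    obtain ⟨hw, hwq⟩ := hfspec u (hexist u hu)
    obtain ⟨hw', hwq'⟩ := hfspec u' (hexist u' hu')
    have hm := hGmono _ hw _ hw'
    simp only [fst2_mk2, snd2_mk2] at hm
    have key : ⟪(u - f u) - (u' - f u'), f u - f u'⟫_ℝ
        = ⟪f u - f u', u - u'⟫_ℝ - ‖f u - f u'‖ ^ 2 := by
      rw [← real_inner_self_eq_norm_sq]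
      have h3 : (u - f u) - (u' - f u') = (u - u') - (f u - f u') := by module
      rw [h3, inner_sub_left, real_inner_comm (u - u')]
    rw [key] at hm
    linarith
  -- Lipschitz
  have hlip : LipschitzOnWith 1 f U := by
    apply LipschitzOnWith.of_dist_le_mul
    intro u hu u' hu'
    rw [dist_eq_norm, dist_eq_norm, NNReal.coe_one, one_mul]
    have h1 := hfirm u hu u' hu'
    have h2 := real_inner_le_norm (f u - f u') (u - u')
    rcases eq_or_lt_of_le (norm_nonneg (f u - f u')) with h3 | h3
    · rw [← h3]; exact norm_nonneg _
    · nlinarith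
  -- the neighborhood W
  set W : Set (E2 n) := {w | fst2 w ∈ X ∧ snd2 w ∈ Y ∧ (fst2 w + snd2 w) ∈ U} with hW
  have hWopen : IsOpen W := by
    have h1 : W = (fst2 ⁻¹' X) ∩ (snd2 ⁻¹' Y) ∩ ((fun w => fst2 w + snd2 w) ⁻¹' U) := by
      ext w
      simp only [hW, Set.mem_setOf_eq, Set.mem_inter_iff, Set.mem_preimage]
      tauto
    rw [h1]
    exact ((hX.preimage continuous_fst2).inter (hY.preimage continuous_snd2)).inter
      (isOpen_ball.preimage (continuous_fst2.add continuous_snd2))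
  have hzbW : zb ∈ W := ⟨hxX, hyY, mem_ball_self hδpos⟩
  refine ⟨U, f, W, isOpen_ball, mem_ball_self hδpos, hWopen, hzbW, hlip, hfirm, ?_⟩
  ext w
  constructor
  · rintro ⟨hwF, hwX, hwY, hwU⟩
    have hwG : w ∈ G := ⟨hwF, hwX, hwY⟩
    exact ⟨hwU, (hfeq w hwG).symm⟩
  · rintro ⟨hwU, hwf⟩
    obtain ⟨hmem, -⟩ := hfspec _ (hexist _ hwU)
    have hww : mk2 (f (fst2 w + snd2 w)) ((fst2 w + snd2 w) - f (fst2 w + snd2 w)) = w := by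
      apply mk2_ext
      · simp [← hwf]
      · simp only [snd2_mk2, ← hwf]
        abel
    rw [hww] at hmem
    exact ⟨hmem.1, hmem.2.1, hmem.2.2, hwU⟩
/-! ### Tangent cones to the graph -/

lemma graph_firm {F : E n → Set (E n)} {U : Set (E n)} {f : E n → E n} {W : Set (E2 n)}
    (hGr : gph F ∩ W = {w | (fst2 w + snd2 w) ∈ U ∧ fst2 w = f (fst2 w + snd2 w)})
    (hfirm : ∀ u ∈ U, ∀ u' ∈ U, ‖f u - f u'‖ ^ 2 ≤ ⟪f u - f u', u - u'⟫_ℝ) :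
    ∀ w₁ ∈ gph F ∩ W, ∀ w₂ ∈ gph F ∩ W, ‖fst2 w₁ - fst2 w₂‖ ^ 2
      ≤ ⟪fst2 w₁ - fst2 w₂, (fst2 w₁ + snd2 w₁) - (fst2 w₂ + snd2 w₂)⟫_ℝ := by
  intro w₁ h₁ w₂ h₂
  rw [hGr] at h₁ h₂
  obtain ⟨hu₁, hf₁⟩ := h₁
  obtain ⟨hu₂, hf₂⟩ := h₂
  have := hfirm _ hu₁ _ hu₂
  rw [← hf₁, ← hf₂] at this
  exact this

/-- Any `n`-dimensional tangent subspace at a point of the locally monotone graph part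
is of the form `MB B` with `B` firmly nonexpansive. -/
lemma tcone_subspace_form {F : E n → Set (E n)} {W : Set (E2 n)} (hWopen : IsOpen W)
    (hfirm2 : ∀ w₁ ∈ gph F ∩ W, ∀ w₂ ∈ gph F ∩ W, ‖fst2 w₁ - fst2 w₂‖ ^ 2
      ≤ ⟪fst2 w₁ - fst2 w₂, (fst2 w₁ + snd2 w₁) - (fst2 w₂ + snd2 w₂)⟫_ℝ)
    {z : E2 n} (hz : z ∈ gph F) (hzW : z ∈ W)
    {L : Submodule ℝ (E2 n)} (hrank : Module.finrank ℝ L = n)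
    (hL : (L : Set (E2 n)) = tcone (gph F) z) :
    ∃ B : E n →L[ℝ] E n, FirmNonexp B ∧ (L : Set (E2 n)) = (MB B : Set (E2 n)) := by
  apply subspace_firm_eq_MB hrank
  intro w hw
  have hw' : w ∈ tcone (gph F) z := by rw [← hL]; exact hw
  rw [tcone_inter_open hWopen hzW] at hw'
  obtain ⟨t, wk, htpos, ht0, hwk, hmem⟩ := hw'
  have hk : ∀ k, ‖fst2 (wk k)‖ ^ 2 ≤ ⟪fst2 (wk k), fst2 (wk k) + snd2 (wk k)⟫_ℝ := by
    intro k
    have h1 := hfirm2 _ (hmem k) _ ⟨hz, hzW⟩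
    have e1 : fst2 (z + t k • wk k) - fst2 z = t k • fst2 (wk k) := by simp
    have e2 : (fst2 (z + t k • wk k) + snd2 (z + t k • wk k)) - (fst2 z + snd2 z)
        = t k • (fst2 (wk k) + snd2 (wk k)) := by
      simp [smul_add]
      module
    rw [e1, e2, real_inner_smul_left, real_inner_smul_right, norm_smul] at h1
    simp only [Real.norm_eq_abs] at h1
    rw [mul_pow, sq_abs] at h1
    nlinarith [h1, pow_pos (htpos k) 2]
  have hlim1 : Tendsto (fun k => ‖fst2 (wk k)‖ ^ 2) atTop (𝓝 (‖fst2 w‖ ^ 2)) :=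
    ((continuous_fst2.norm.pow 2).tendsto w).comp hwk
  have hlim2 : Tendsto (fun k => ⟪fst2 (wk k), fst2 (wk k) + snd2 (wk k)⟫_ℝ) atTop
      (𝓝 (⟪fst2 w, fst2 w + snd2 w⟫_ℝ)) :=
    ((continuous_fst2.inner (continuous_fst2.add continuous_snd2)).tendsto w).comp hwk
  exact le_of_tendsto_of_tendsto' hlim1 hlim2 hk

/-- difference quotients converge to the derivative along positive scalings. -/
lemma quot_tendsto {f : E n → E n} {A : E n →L[ℝ] E n} {u : E n} (hdiff : HasFDerivAt f A u)
    {t : ℕ → ℝ} {om : ℕ → E n} {ω : E n} (htpos : ∀ k, 0 < t k)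
    (ht0 : Tendsto t atTop (𝓝 0)) (hom : Tendsto om atTop (𝓝 ω)) :
    Tendsto (fun k => (t k)⁻¹ • (f (u + t k • om k) - f u) - A (om k)) atTop (𝓝 0) := by
  have hlo := hasFDerivAt_iff_isLittleO_nhds_zero.mp hdiff
  rw [NormedAddCommGroup.tendsto_nhds_zero]
  intro ε hε
  set M : ℝ := ‖ω‖ + 1 with hMdef
  have hM : 0 < M := by positivity
  have homB : ∀ᶠ k in atTop, ‖om k‖ < M := by
    apply (hom.norm).eventually_lt_const
    rw [hMdef]; linarith
  have hc : 0 < ε / (2 * M) := by positivity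
  have hev : ∀ᶠ h in 𝓝 (0 : E n), ‖f (u + h) - f u - A h‖ ≤ ε / (2 * M) * ‖h‖ :=
    hlo.def hc
  have hseq : Tendsto (fun k => t k • om k) atTop (𝓝 0) := by
    have := ht0.smul hom
    rw [zero_smul] at this
    exact this
  filter_upwards [hseq.eventually hev, homB] with k hk hB
  have e : (t k)⁻¹ • (f (u + t k • om k) - f u) - A (om k)
      = (t k)⁻¹ • (f (u + t k • om k) - f u - A (t k • om k)) := by
    have hA : A (t k • om k) = t k • A (om k) := A.map_smul _ _
    rw [hA, smul_sub, smul_sub, inv_smul_smul₀ (htpos k).ne']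
    module
  rw [e, norm_smul]
  have h1 : ‖(t k)⁻¹‖ = (t k)⁻¹ := by
    rw [Real.norm_eq_abs, abs_of_pos (inv_pos.mpr (htpos k))]
  have h2 : ‖t k • om k‖ = t k * ‖om k‖ := by
    rw [norm_smul, Real.norm_eq_abs, abs_of_pos (htpos k)]
  calc ‖(t k)⁻¹‖ * ‖f (u + t k • om k) - f u - A (t k • om k)‖
      ≤ ‖(t k)⁻¹‖ * (ε / (2 * M) * ‖t k • om k‖) := by
        apply mul_le_mul_of_nonneg_left hk (norm_nonneg _)
    _ = ε / (2 * M) * ‖om k‖ := by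
        rw [h1, h2]
        field_simp [(htpos k).ne']
    _ < ε := by
        have h3 : ε / (2 * M) * ‖om k‖ ≤ ε / (2 * M) * M := by
          apply mul_le_mul_of_nonneg_left hB.le hc.le
        have h4 : ε / (2 * M) * M = ε / 2 := by field_simp
        linarith
set_option maxHeartbeats 1000000 in
/-- At a point of differentiability of the localization `f`, the tangent cone to `gph F`
is the subspace `MB A` where `A = Df(u)`. -/
lemma tcone_at_diff {F : E n → Set (E n)} {U : Set (E n)} {f : E n → E n} {W : Set (E2 n)}
    (hWopen : IsOpen W) (hUopen : IsOpen U)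
    (hGr : gph F ∩ W = {w | (fst2 w + snd2 w) ∈ U ∧ fst2 w = f (fst2 w + snd2 w)})
    {u : E n} (hu : u ∈ U) {A : E n →L[ℝ] E n} (hdiff : HasFDerivAt f A u) :
    tcone (gph F) (mk2 (f u) (u - f u)) = (MB A : Set (E2 n)) := by
  set z : E2 n := mk2 (f u) (u - f u) with hz
  have hqz : fst2 z + snd2 z = u := by
    rw [hz]; simp only [fst2_mk2, snd2_mk2]; abel
  have hzmem : z ∈ gph F ∩ W := by
    rw [hGr]
    refine ⟨by rwa [hqz], ?_⟩
    rw [hqz, hz, fst2_mk2]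
  ext w
  constructor
  · intro hw
    rw [tcone_inter_open hWopen hzmem.2] at hw
    obtain ⟨t, wk, htpos, ht0, hwk, hmem⟩ := hw
    have hmem' : ∀ k, f u + t k • fst2 (wk k)
        = f (u + t k • (fst2 (wk k) + snd2 (wk k))) := by
      intro k
      have h1 := hmem k
      rw [hGr] at h1
      obtain ⟨hU1, hf1⟩ := h1
      have e1 : fst2 (z + t k • wk k) = f u + t k • fst2 (wk k) := by
        rw [hz]; simp
      have e2 : fst2 (z + t k • wk k) + snd2 (z + t k • wk k)
          = u + t k • (fst2 (wk k) + snd2 (wk k)) := by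
        rw [hz]; simp only [fst2_add, snd2_add, fst2_smul, snd2_smul, fst2_mk2, snd2_mk2,
          smul_add]
        module
      rw [e2, e1] at hf1
      exact hf1
    have hvk : ∀ k, fst2 (wk k)
        = (t k)⁻¹ • (f (u + t k • (fst2 (wk k) + snd2 (wk k))) - f u) := by
      intro k
      rw [← hmem' k, add_sub_cancel_left, inv_smul_smul₀ (htpos k).ne']
    have homega : Tendsto (fun k => fst2 (wk k) + snd2 (wk k)) atTop
        (𝓝 (fst2 w + snd2 w)) :=
      ((continuous_fst2.add continuous_snd2).tendsto w).comp hwk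
    have hq := quot_tendsto hdiff htpos ht0 homega
    have hq' : Tendsto (fun k => fst2 (wk k) - A (fst2 (wk k) + snd2 (wk k)))
        atTop (𝓝 0) := by
      have hfe : (fun k => fst2 (wk k) - A (fst2 (wk k) + snd2 (wk k)))
          = fun k => (t k)⁻¹ • (f (u + t k • (fst2 (wk k) + snd2 (wk k))) - f u)
            - A (fst2 (wk k) + snd2 (wk k)) := by
        funext k
        rw [← hvk k]
      rw [hfe]
      exact hq
    have hlim2 : Tendsto (fun k => fst2 (wk k) - A (fst2 (wk k) + snd2 (wk k))) atTop
        (𝓝 (fst2 w - A (fst2 w + snd2 w))) :=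
      ((continuous_fst2.sub (A.continuous.comp
        (continuous_fst2.add continuous_snd2))).tendsto w).comp hwk
    have heq : fst2 w = A (fst2 w + snd2 w) :=
      sub_eq_zero.mp (tendsto_nhds_unique hlim2 hq')
    rw [MB_coe]
    refine ⟨fst2 w + snd2 w, ?_⟩
    apply mk2_ext
    · rw [fst2_mk2]; exact heq
    · rw [snd2_mk2, ← heq]; abel
  · intro hw
    rw [MB_coe] at hw
    obtain ⟨p, rfl⟩ := hw
    obtain ⟨r, hrpos, hrU⟩ := Metric.isOpen_iff.mp hUopen u hu
    obtain ⟨K, hK⟩ := exists_nat_gt (‖p‖ / r)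
    set t : ℕ → ℝ := fun k => 1 / ((k : ℝ) + (K : ℝ) + 1) with htdef
    have htpos : ∀ k, 0 < t k := fun k => by positivity
    have ht0 : Tendsto t atTop (𝓝 0) := by
      have h2 := (tendsto_one_div_add_atTop_nhds_zero_nat (𝕜 := ℝ)).comp (tendsto_add_atTop_nat K)
      have hfe : ((fun m : ℕ => 1 / ((m : ℝ) + 1)) ∘ (fun k => k + K)) = t := by
        funext k
        simp only [Function.comp_apply, htdef]
        push_cast
        ring_nf
      rwa [hfe] at h2
    have htle : ∀ k, t k ≤ 1 / ((K : ℝ) + 1) := by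
      intro k
      rw [htdef]
      apply div_le_div_of_nonneg_left zero_le_one (by positivity)
      have : (0:ℝ) ≤ (k:ℝ) := Nat.cast_nonneg k
      linarith
    have hmemU : ∀ k, u + t k • p ∈ U := by
      intro k
      apply hrU
      rw [mem_ball, dist_eq_norm, add_sub_cancel_left, norm_smul, Real.norm_eq_abs,
        abs_of_pos (htpos k)]
      have h1 : ‖p‖ < (K : ℝ) * r := by
        rcases le_or_gt ((K:ℝ) * r) ‖p‖ with h | h
        · exfalso
          have := (div_lt_iff₀ hrpos).mp hK
          linarith
        · exact h
      calc t k * ‖p‖ ≤ 1 / ((K : ℝ) + 1) * ‖p‖ := by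
            apply mul_le_mul_of_nonneg_right (htle k) (norm_nonneg p)
        _ < r := by
            rw [div_mul_eq_mul_div, one_mul, div_lt_iff₀ (by positivity)]
            nlinarith [hrpos, norm_nonneg p]
    set v : ℕ → E n := fun k => (t k)⁻¹ • (f (u + t k • p) - f u) with hvdef
    set wk : ℕ → E2 n := fun k => mk2 (v k) (p - v k) with hwkdef
    have hmemk : ∀ k, z + t k • wk k ∈ gph F := by
      intro k
      have he : z + t k • wk k
          = mk2 (f (u + t k • p)) ((u + t k • p) - f (u + t k • p)) := by
        have hv2 : t k • v k = f (u + t k • p) - f u := by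
          rw [hvdef]
          exact smul_inv_smul₀ (htpos k).ne' _
        apply mk2_ext
        · simp only [fst2_add, fst2_smul, hz, fst2_mk2, hwkdef]
          rw [hv2]
          abel
        · simp only [snd2_add, snd2_smul, hz, snd2_mk2, hwkdef, smul_sub]
          rw [hv2]
          abel
      rw [he]
      have hin : mk2 (f (u + t k • p)) ((u + t k • p) - f (u + t k • p)) ∈ gph F ∩ W := by
        rw [hGr]
        constructor
        · simp only [Set.mem_setOf_eq, fst2_mk2, snd2_mk2, add_sub_cancel]
          exact hmemU k
        · simp only [Set.mem_setOf_eq, fst2_mk2, snd2_mk2, add_sub_cancel]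
      exact hin.1
    have hv : Tendsto v atTop (𝓝 (A p)) := by
      have hq := quot_tendsto hdiff htpos ht0 (tendsto_const_nhds (x := p))
      have hfe : v = fun k => ((t k)⁻¹ • (f (u + t k • p) - f u) - A p) + A p := by
        funext k
        rw [hvdef]
        abel
      rw [hfe]
      have := hq.add (tendsto_const_nhds (x := A p))
      rwa [zero_add] at this
    have hwk : Tendsto wk atTop (𝓝 (mk2 (A p) (p - A p))) :=
      tendsto_mk2 hv (tendsto_const_nhds.sub hv)
    exact ⟨t, wk, htpos, ht0, hwk, hmemk⟩
/-! ### Orthogonal projection lemmas -/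

lemma projC_mem (L : Submodule ℝ (E2 n)) (w : E2 n) : projC L w ∈ L :=
  SetLike.coe_mem _

lemma projC_of_mem {L : Submodule ℝ (E2 n)} {w : E2 n} (hw : w ∈ L) : projC L w = w := by
  show ((L.orthogonalProjectionOnto w : L) : E2 n) = w
  exact Submodule.starProjection_eq_self_iff.mpr hw

lemma projC_of_mem_orth {L : Submodule ℝ (E2 n)} {w : E2 n} (hw : w ∈ Lᗮ) : projC L w = 0 := by
  show ((L.orthogonalProjectionOnto w : L) : E2 n) = 0
  rw [Submodule.orthogonalProjectionOnto_apply_of_mem_orthogonal hw]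
  rfl

lemma norm_projC_le (L : Submodule ℝ (E2 n)) : ‖projC L‖ ≤ 1 := by
  apply ContinuousLinearMap.opNorm_le_bound _ zero_le_one
  intro w
  rw [one_mul]
  calc ‖projC L w‖ = ‖(L.orthogonalProjectionOnto w : L)‖ := rfl
    _ ≤ ‖w‖ := Submodule.orthogonalProjectionOnto_norm_le L |>.trans (le_refl 1) |> fun h => by
        have := (L.orthogonalProjectionOnto).le_opNorm w
        calc ‖(L.orthogonalProjectionOnto w : L)‖ = ‖L.orthogonalProjectionOnto w‖ := rfl
          _ ≤ ‖L.orthogonalProjectionOnto‖ * ‖w‖ := (L.orthogonalProjectionOnto).le_opNorm w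
          _ ≤ 1 * ‖w‖ := by
              apply mul_le_mul_of_nonneg_right (Submodule.orthogonalProjectionOnto_norm_le L) (norm_nonneg w)
          _ = ‖w‖ := one_mul _

lemma projC_idem (L : Submodule ℝ (E2 n)) (w : E2 n) : projC L (projC L w) = projC L w :=
  projC_of_mem (projC_mem L w)

lemma projC_inner (L : Submodule ℝ (E2 n)) (v w : E2 n) :
    ⟪projC L v, w⟫_ℝ = ⟪v, projC L w⟫_ℝ :=
  Submodule.inner_starProjection_left_eq_right L v w

lemma clm_tendsto_apply {X Y : Type*} [NormedAddCommGroup X] [NormedSpace ℝ X]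
    [NormedAddCommGroup Y] [NormedSpace ℝ Y] {Bk : ℕ → X →L[ℝ] Y} {B : X →L[ℝ] Y}
    (h : Tendsto Bk atTop (𝓝 B)) (v : X) :
    Tendsto (fun k => Bk k v) atTop (𝓝 (B v)) := by
  have hcont : Continuous (fun T : X →L[ℝ] Y => T v) :=
    (ContinuousLinearMap.apply ℝ Y v).continuous
  exact (hcont.tendsto B).comp h

set_option synthInstance.maxHeartbeats 1000000 in
set_option maxHeartbeats 1000000 in
/-- Extraction of a convergent subsequence of orthogonal projections, whose limit is again
an orthogonal projection onto a subspace. -/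
lemma proj_limit_subseq (Lk : ℕ → Submodule ℝ (E2 n)) :
    ∃ (φ : ℕ → ℕ) (L : Submodule ℝ (E2 n)), StrictMono φ ∧
      Tendsto (fun k => dZ (Lk (φ k)) L) atTop (𝓝 0) := by
  have hmem : ∀ k, projC (Lk k) ∈ closedBall (0 : E2 n →L[ℝ] E2 n) 1 := by
    intro k
    rw [mem_closedBall, dist_zero_right]
    exact norm_projC_le _
  obtain ⟨P, hP, φ, hφ, hconv⟩ := (isCompact_closedBall _ _).tendsto_subseq hmem
  -- P is idempotent
  have hidem : P * P = P := by
    have h1 : Tendsto (fun k => projC (Lk (φ k)) * projC (Lk (φ k))) atTop (𝓝 (P * P)) :=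
      hconv.mul hconv
    have h2 : (fun k => projC (Lk (φ k)) * projC (Lk (φ k))) = fun k => projC (Lk (φ k)) := by
      funext k
      ext w
      exact projC_idem _ w
    rw [h2] at h1
    exact tendsto_nhds_unique h1 hconv
  -- P is self-adjoint
  have hsa : ∀ v w : E2 n, ⟪P v, w⟫_ℝ = ⟪v, P w⟫_ℝ := by
    intro v w
    have h1 : Tendsto (fun k => ⟪projC (Lk (φ k)) v, w⟫_ℝ) atTop (𝓝 ⟪P v, w⟫_ℝ) :=
      ((continuous_id.inner continuous_const).tendsto (P v)).comp (clm_tendsto_apply hconv v)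
    have h2 : Tendsto (fun k => ⟪v, projC (Lk (φ k)) w⟫_ℝ) atTop (𝓝 ⟪v, P w⟫_ℝ) :=
      ((continuous_const.inner continuous_id).tendsto (P w)).comp (clm_tendsto_apply hconv w)
    have h3 : (fun k => ⟪projC (Lk (φ k)) v, w⟫_ℝ) = fun k => ⟪v, projC (Lk (φ k)) w⟫_ℝ := by
      funext k
      exact projC_inner _ v w
    rw [h3] at h1
    exact tendsto_nhds_unique h1 h2
  set L : Submodule ℝ (E2 n) := LinearMap.range (P : E2 n →ₗ[ℝ] E2 n) with hLdef
  have hProj : projC L = P := by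
    ext w
    have h1 : P w ∈ L := ⟨w, rfl⟩
    have h2 : w - P w ∈ Lᗮ := by
      rw [Submodule.mem_orthogonal]
      rintro v ⟨x, rfl⟩
      have : P x = P (P x) := by
        conv_lhs => rw [← hidem]
        rfl
      calc ⟪(P : E2 n →ₗ[ℝ] E2 n) x, w - P w⟫_ℝ = ⟪P x, w - P w⟫_ℝ := rfl
        _ = ⟪x, P (w - P w)⟫_ℝ := hsa x (w - P w)
        _ = ⟪x, P w - P (P w)⟫_ℝ := by rw [map_sub]
        _ = 0 := by
            have hPP : P (P w) = P w := by
              have := congrArg (fun T : E2 n →L[ℝ] E2 n => T w) hidem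
              exact this
            rw [hPP, sub_self, inner_zero_right]
    calc projC L w = projC L (P w + (w - P w)) := by rw [add_sub_cancel]
      _ = projC L (P w) + projC L (w - P w) := map_add _ _ _
      _ = P w + 0 := by rw [projC_of_mem h1, projC_of_mem_orth h2]
      _ = P w := add_zero _
  refine ⟨φ, L, hφ, ?_⟩
  have := tendsto_iff_norm_sub_tendsto_zero.mp hconv
  simpa [dZ, hProj] using this
/-! ### Limit identification -/

set_option maxHeartbeats 1000000 in
lemma MB_limit {Lk : ℕ → Submodule ℝ (E2 n)} {Bk : ℕ → E n →L[ℝ] E n} {B : E n →L[ℝ] E n}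
    {L : Submodule ℝ (E2 n)}
    (hLk : ∀ k, (Lk k : Set (E2 n)) = (MB (Bk k) : Set (E2 n)))
    (hBk : ∀ k, ‖Bk k‖ ≤ 1)
    (hB : Tendsto Bk atTop (𝓝 B))
    (hd : Tendsto (fun k => dZ (Lk k) L) atTop (𝓝 0)) :
    (L : Set (E2 n)) = (MB B : Set (E2 n)) := by
  have hPk : ∀ k (w : E2 n), projC (Lk k) w ∈ MB (Bk k) := by
    intro k w
    rw [← SetLike.mem_coe, ← hLk k]
    exact projC_mem _ _
  have hBnorm : Tendsto (fun k => ‖Bk k - B‖) atTop (𝓝 0) :=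
    tendsto_iff_norm_sub_tendsto_zero.mp hB
  ext w
  constructor
  · intro hwL
    have hw : w ∈ L := hwL
    have h1 : Tendsto (fun k => projC (Lk k) w) atTop (𝓝 w) := by
      rw [tendsto_iff_norm_sub_tendsto_zero]
      have hb : ∀ k, ‖projC (Lk k) w - w‖ ≤ dZ (Lk k) L * ‖w‖ := by
        intro k
        have he : projC (Lk k) w - w = (projC (Lk k) - projC L) w := by
          rw [ContinuousLinearMap.sub_apply, projC_of_mem hw]
        rw [he]
        exact ContinuousLinearMap.le_opNorm _ w
      have hg : Tendsto (fun k => dZ (Lk k) L * ‖w‖) atTop (𝓝 0) := by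
        have := hd.mul_const ‖w‖
        rwa [zero_mul] at this
      exact squeeze_zero (fun k => norm_nonneg _) hb hg
    set q : E n := fst2 w + snd2 w with hqdef
    set pk : ℕ → E n := fun k => fst2 (projC (Lk k) w) + snd2 (projC (Lk k) w) with hpkdef
    have hpk : Tendsto pk atTop (𝓝 q) :=
      ((continuous_fst2.add continuous_snd2).tendsto w).comp h1
    have hrep : ∀ k, projC (Lk k) w = mk2 (Bk k (pk k)) (pk k - Bk k (pk k)) :=
      fun k => (q_mem_MB (hPk k w)).2
    have hBp : Tendsto (fun k => Bk k (pk k)) atTop (𝓝 (B q)) := by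
      rw [tendsto_iff_norm_sub_tendsto_zero]
      have hb : ∀ k, ‖Bk k (pk k) - B q‖
          ≤ ‖pk k - q‖ + ‖Bk k - B‖ * ‖q‖ := by
        intro k
        have e : Bk k (pk k) - B q = Bk k (pk k - q) + (Bk k - B) q := by
          rw [map_sub, ContinuousLinearMap.sub_apply]
          abel
        rw [e]
        calc ‖Bk k (pk k - q) + (Bk k - B) q‖
            ≤ ‖Bk k (pk k - q)‖ + ‖(Bk k - B) q‖ := norm_add_le _ _
          _ ≤ ‖pk k - q‖ + ‖Bk k - B‖ * ‖q‖ := by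
              have t1 : ‖Bk k (pk k - q)‖ ≤ ‖pk k - q‖ := by
                calc ‖Bk k (pk k - q)‖ ≤ ‖Bk k‖ * ‖pk k - q‖ :=
                      (Bk k).le_opNorm _
                  _ ≤ 1 * ‖pk k - q‖ :=
                      mul_le_mul_of_nonneg_right (hBk k) (norm_nonneg _)
                  _ = ‖pk k - q‖ := one_mul _
              have t2 : ‖(Bk k - B) q‖ ≤ ‖Bk k - B‖ * ‖q‖ :=
                ContinuousLinearMap.le_opNorm _ _
              linarith
      have hg : Tendsto (fun k => ‖pk k - q‖ + ‖Bk k - B‖ * ‖q‖) atTop (𝓝 0) := by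
        have g1 : Tendsto (fun k => ‖pk k - q‖) atTop (𝓝 0) :=
          tendsto_iff_norm_sub_tendsto_zero.mp hpk
        have g2 : Tendsto (fun k => ‖Bk k - B‖ * ‖q‖) atTop (𝓝 0) := by
          have := hBnorm.mul_const ‖q‖
          rwa [zero_mul] at this
        have := g1.add g2
        rwa [add_zero] at this
      exact squeeze_zero (fun k => norm_nonneg _) hb hg
    have h2 : Tendsto (fun k => projC (Lk k) w) atTop (𝓝 (mk2 (B q) (q - B q))) := by
      have he : (fun k => projC (Lk k) w)
          = fun k => mk2 (Bk k (pk k)) (pk k - Bk k (pk k)) := funext hrep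
      rw [he]
      exact tendsto_mk2 hBp (hpk.sub hBp)
    have heq := tendsto_nhds_unique h1 h2
    rw [MB_coe]
    exact ⟨q, heq⟩
  · intro hw
    rw [MB_coe] at hw
    obtain ⟨p, rfl⟩ := hw
    set wk : ℕ → E2 n := fun k => mk2 (Bk k p) (p - Bk k p) with hwkdef
    have hwmem : ∀ k, wk k ∈ Lk k := by
      intro k
      rw [← SetLike.mem_coe, hLk k, MB_coe]
      exact ⟨p, rfl⟩
    have hBkp : Tendsto (fun k => Bk k p) atTop (𝓝 (B p)) := clm_tendsto_apply hB p
    have hwk : Tendsto wk atTop (𝓝 (mk2 (B p) (p - B p))) :=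
      tendsto_mk2 hBkp (tendsto_const_nhds.sub hBkp)
    have hbound : ∀ k, ‖wk k‖ ≤ 3 * ‖p‖ := by
      intro k
      have hB1 : ‖Bk k p‖ ≤ ‖p‖ := by
        calc ‖Bk k p‖ ≤ ‖Bk k‖ * ‖p‖ := (Bk k).le_opNorm _
          _ ≤ 1 * ‖p‖ := mul_le_mul_of_nonneg_right (hBk k) (norm_nonneg _)
          _ = ‖p‖ := one_mul _
      calc ‖wk k‖ ≤ ‖Bk k p‖ + ‖p - Bk k p‖ := norm_mk2_le _ _
        _ ≤ ‖Bk k p‖ + (‖p‖ + ‖Bk k p‖) := by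
            have := norm_sub_le p (Bk k p)
            linarith
        _ ≤ 3 * ‖p‖ := by linarith
    have hPwk : Tendsto (fun k => wk k - projC L (wk k)) atTop (𝓝 0) := by
      have hb : ∀ k, ‖wk k - projC L (wk k)‖ ≤ dZ (Lk k) L * (3 * ‖p‖) := by
        intro k
        have he : wk k - projC L (wk k) = (projC (Lk k) - projC L) (wk k) := by
          rw [ContinuousLinearMap.sub_apply, projC_of_mem (hwmem k)]
        rw [he]
        calc ‖(projC (Lk k) - projC L) (wk k)‖
            ≤ ‖projC (Lk k) - projC L‖ * ‖wk k‖ := ContinuousLinearMap.le_opNorm _ _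
          _ ≤ dZ (Lk k) L * (3 * ‖p‖) := by
              apply mul_le_mul_of_nonneg_left (hbound k)
              exact norm_nonneg _
      have hg : Tendsto (fun k => dZ (Lk k) L * (3 * ‖p‖)) atTop (𝓝 0) := by
        have := hd.mul_const (3 * ‖p‖)
        rwa [zero_mul] at this
      exact squeeze_zero_norm hb hg
    have hPw : Tendsto (fun k => projC L (wk k)) atTop
        (𝓝 (projC L (mk2 (B p) (p - B p)))) :=
      ((projC L).continuous.tendsto _).comp hwk
    have hsum : Tendsto wk atTop (𝓝 (0 + projC L (mk2 (B p) (p - B p)))) := by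
      have he : wk = fun k => (wk k - projC L (wk k)) + projC L (wk k) := by
        funext k
        abel
      rw [he]
      exact hPwk.add hPw
    rw [zero_add] at hsum
    have heq := tendsto_nhds_unique hwk hsum
    rw [SetLike.mem_coe, heq]
    exact projC_mem _ _

lemma firm_limit {Bk : ℕ → E n →L[ℝ] E n} {B : E n →L[ℝ] E n}
    (hfirm : ∀ k, FirmNonexp (Bk k)) (hB : Tendsto Bk atTop (𝓝 B)) : FirmNonexp B := by
  intro v
  have happ := clm_tendsto_apply hB v
  have h1 : Tendsto (fun k => ‖Bk k v‖ ^ 2) atTop (𝓝 (‖B v‖ ^ 2)) :=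
    ((continuous_norm.pow 2).tendsto (B v)).comp happ
  have h2 : Tendsto (fun k => ⟪Bk k v, v⟫_ℝ) atTop (𝓝 (⟪B v, v⟫_ℝ)) :=
    ((continuous_id.inner continuous_const).tendsto (B v)).comp happ
  exact le_of_tendsto_of_tendsto' h1 h2 (fun k => hfirm k v)
/-! ### Density of differentiability points (Rademacher) -/

lemma exists_diff_near {U : Set (E n)} (hUopen : IsOpen U) {f : E n → E n}
    (hlip : LipschitzOnWith 1 f U) {u : E n} (hu : u ∈ U) {r : ℝ} (hr : 0 < r) :
    ∃ u' ∈ U, dist u' u < r ∧ ∃ A : E n →L[ℝ] E n, HasFDerivAt f A u' := by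
  have hae := hlip.ae_differentiableWithinAt_of_mem (μ := MeasureTheory.volume)
  set Bs : Set (E n) := ball u r ∩ U with hBs
  have hBopen : IsOpen Bs := isOpen_ball.inter hUopen
  have hBne : Bs.Nonempty := ⟨u, mem_ball_self hr, hu⟩
  have hpos : 0 < MeasureTheory.volume Bs := hBopen.measure_pos MeasureTheory.volume hBne
  have hexists : ∃ x ∈ Bs, (x ∈ U → DifferentiableWithinAt ℝ f U x) := by
    by_contra hcon
    push_neg at hcon
    have hsub : Bs ⊆ {x | ¬(x ∈ U → DifferentiableWithinAt ℝ f U x)} := by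
      intro x hx
      rw [Set.mem_setOf_eq, Classical.not_imp]
      exact hcon x hx
    have hz := MeasureTheory.ae_iff.mp hae
    have := (MeasureTheory.measure_mono hsub).trans hz.le
    exact absurd (le_antisymm this zero_le) hpos.ne'
  obtain ⟨x, hxB, hx⟩ := hexists
  have hxU : x ∈ U := hxB.2
  have hdiff : DifferentiableAt ℝ f x :=
    (hx hxU).differentiableAt (hUopen.mem_nhds hxU)
  exact ⟨x, hxU, mem_ball.mp hxB.1, fderiv ℝ f x, hdiff.hasFDerivAt⟩

/-! ### Form of the elements of `Sp F z` -/

set_option maxHeartbeats 1000000 in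
set_option synthInstance.maxHeartbeats 400000 in
lemma Sp_elem_form {F : E n → Set (E n)} {W : Set (E2 n)} (hWopen : IsOpen W)
    (hfirm2 : ∀ w₁ ∈ gph F ∩ W, ∀ w₂ ∈ gph F ∩ W, ‖fst2 w₁ - fst2 w₂‖ ^ 2
      ≤ ⟪fst2 w₁ - fst2 w₂, (fst2 w₁ + snd2 w₁) - (fst2 w₂ + snd2 w₂)⟫_ℝ)
    {z : E2 n} (hzW : z ∈ W) {L : Submodule ℝ (E2 n)} (hL : L ∈ Sp F z) :
    ∃ B : E n →L[ℝ] E n, FirmNonexp B ∧ (L : Set (E2 n)) = (MB B : Set (E2 n)) := by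
  obtain ⟨hrank, zk, Lk, hprops, hzk, hdZ⟩ := hL
  obtain ⟨K₀, hK₀⟩ := (hzk.eventually (hWopen.mem_nhds hzW)).exists_forall_of_atTop
  have hW' : ∀ k, zk (k + K₀) ∈ W := fun k => hK₀ _ (Nat.le_add_left _ _)
  have hchoice : ∀ k, ∃ B : E n →L[ℝ] E n, FirmNonexp B ∧
      ((Lk (k + K₀) : Set (E2 n)) = (MB B : Set (E2 n))) := by
    intro k
    exact tcone_subspace_form hWopen hfirm2 (hprops (k + K₀)).1 (hW' k)
      (hprops (k + K₀)).2.1 (hprops (k + K₀)).2.2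
  choose Bk hBfirm hBeq using hchoice
  have hBnorm : ∀ k, Bk k ∈ closedBall (0 : E n →L[ℝ] E n) 1 := by
    intro k
    rw [mem_closedBall, dist_zero_right]
    exact norm_le_one_of_firm (hBfirm k)
  obtain ⟨B, hBmem, ψ, hψ, hconv⟩ := (isCompact_closedBall _ _).tendsto_subseq hBnorm
  refine ⟨B, firm_limit (fun k => hBfirm (ψ k)) hconv, ?_⟩
  apply MB_limit (Lk := fun k => Lk (ψ k + K₀)) (Bk := fun k => Bk (ψ k))
    (fun k => hBeq (ψ k)) (fun k => norm_le_one_of_firm (hBfirm (ψ k))) hconv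
  exact hdZ.comp ((tendsto_add_atTop_nat K₀).comp hψ.tendsto_atTop)
set_option maxHeartbeats 2000000 in
set_option synthInstance.maxHeartbeats 400000 in
theorem stmt10 (n : ℕ) (F : E n → Set (E n)) (zb : E2 n) (hzb : zb ∈ gph F)
    (hmono : LocMaxMonoAt F zb) :
    GraphLipAt F zb (fun z => mk2 (fst2 z + snd2 z) (fst2 z)) ∧
    SCDAround F zb ∧
    ∃ δ > (0 : ℝ), ∀ z ∈ gph F, dist z zb < δ → ∀ L ∈ Sp F z,
      ∃ B : E n →L[ℝ] E n, FirmNonexp B ∧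
        (L : Set (E2 n)) = {w | ∃ p : E n, w = mk2 (B p) (p - B p)} ∧
        (adjS L : Set (E2 n)) = {w | ∃ p : E n,
          w = mk2 (ContinuousLinearMap.adjoint B p) (p - ContinuousLinearMap.adjoint B p)} := by
  obtain ⟨U, f, W, hUopen, hubU, hWopen, hzbW, hlip, hfirm, hGr⟩ := local_graph F zb hzb hmono
  have hfirm2 := graph_firm hGr hfirm
  have hPhiCoe : (fun z : E2 n => mk2 (fst2 z + snd2 z) (fst2 z)) = ⇑(PhiC n) :=
    funext (fun z => (PhiC_apply z).symm)
  -- Part 1: graphical Lipschitzianity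
  have part1 : GraphLipAt F zb (fun z => mk2 (fst2 z + snd2 z) (fst2 z)) := by
    refine ⟨fun z => mk2 (snd2 z) (fst2 z - snd2 z), W, U, f, 1, hWopen, hzbW, ?_, ?_, ?_, ?_,
      ?_, hUopen, hlip, ?_⟩
    · rw [hPhiCoe]
      exact (PhiC n).contDiff.contDiffOn
    · intro z _ w _ h
      have h1 := congrArg snd2 h
      have h2 := congrArg fst2 h
      simp only [fst2_mk2, snd2_mk2] at h1 h2
      apply mk2_ext h1
      rw [h1] at h2
      exact add_left_cancel h2
    · rw [hPhiCoe, Phi_image_eq_preimage W]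
      exact hWopen.preimage (PsiC n).continuous
    · have hPsiCoe : (fun z : E2 n => mk2 (snd2 z) (fst2 z - snd2 z)) = ⇑(PsiC n) :=
        funext (fun z => (PsiC_apply z).symm)
      rw [hPsiCoe]
      exact (PsiC n).contDiff.contDiffOn
    · intro z _
      show mk2 (snd2 (mk2 (fst2 z + snd2 z) (fst2 z)))
        (fst2 (mk2 (fst2 z + snd2 z) (fst2 z)) - snd2 (mk2 (fst2 z + snd2 z) (fst2 z))) = z
      apply mk2_ext
      · simp
      · simp
    · ext w'
      constructor
      · rintro ⟨w, hw, rfl⟩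
        rw [hGr] at hw
        obtain ⟨hU1, hf1⟩ := hw
        constructor
        · simpa using hU1
        · simpa using hf1
      · rintro ⟨hU1, hf1⟩
        refine ⟨mk2 (snd2 w') (fst2 w' - snd2 w'), ?_, ?_⟩
        · rw [hGr]
          constructor
          · simp only [Set.mem_setOf_eq, fst2_mk2, snd2_mk2, add_sub_cancel]
            exact hU1
          · simp only [Set.mem_setOf_eq, fst2_mk2, snd2_mk2, add_sub_cancel]
            exact hf1
        · apply mk2_ext
          · simp only [fst2_mk2, snd2_mk2, add_sub_cancel]
          · simp only [fst2_mk2, snd2_mk2]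
  obtain ⟨δ, hδpos, hδ⟩ := Metric.isOpen_iff.mp hWopen zb hzbW
  -- Part 2: the SCD property around zb
  have part2 : SCDAround F zb := by
    refine ⟨δ, hδpos, ?_⟩
    intro z hzF hdist
    have hzW : z ∈ W := hδ (by rwa [mem_ball])
    have hzS : (fst2 z + snd2 z) ∈ U ∧ fst2 z = f (fst2 z + snd2 z) := by
      have hz2 : z ∈ gph F ∩ W := ⟨hzF, hzW⟩
      rwa [hGr] at hz2
    set u' : E n := fst2 z + snd2 z with hu'def
    have hchoice : ∀ k : ℕ, ∃ u'' ∈ U, dist u'' u' < 1/((k:ℝ)+1) ∧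
        ∃ A : E n →L[ℝ] E n, HasFDerivAt f A u'' :=
      fun k => exists_diff_near hUopen hlip hzS.1 (by positivity)
    choose uk hukU hukdist hukdiff using hchoice
    choose Ak hAk using hukdiff
    have huk : Tendsto uk atTop (𝓝 u') := by
      rw [tendsto_iff_dist_tendsto_zero]
      exact squeeze_zero (fun k => dist_nonneg) (fun k => (hukdist k).le)
        tendsto_one_div_add_atTop_nhds_zero_nat
    set zk : ℕ → E2 n := fun k => mk2 (f (uk k)) (uk k - f (uk k)) with hzkdef
    have hzkW : ∀ k, zk k ∈ gph F ∩ W := by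
      intro k
      rw [hGr]
      constructor
      · simp only [Set.mem_setOf_eq, hzkdef, fst2_mk2, snd2_mk2, add_sub_cancel]
        exact hukU k
      · simp only [Set.mem_setOf_eq, hzkdef, fst2_mk2, snd2_mk2, add_sub_cancel]
    have hfuk : Tendsto (fun k => f (uk k)) atTop (𝓝 (f u')) :=
      ((hlip.continuousOn.continuousAt (hUopen.mem_nhds hzS.1)).tendsto).comp huk
    have hzk : Tendsto zk atTop (𝓝 z) := by
      have h1 : Tendsto zk atTop (𝓝 (mk2 (f u') (u' - f u'))) :=
        tendsto_mk2 hfuk (huk.sub hfuk)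
      have h2 : mk2 (f u') (u' - f u') = z := by
        apply mk2_ext
        · rw [fst2_mk2, ← hzS.2]
        · rw [snd2_mk2, ← hzS.2, hu'def]
          abel
      rwa [h2] at h1
    have htc : ∀ k, (MB (Ak k) : Set (E2 n)) = tcone (gph F) (zk k) :=
      fun k => (tcone_at_diff hWopen hUopen hGr (hukU k) (hAk k)).symm
    obtain ⟨φ, L, hφ, hdZ⟩ := proj_limit_subseq (fun k => MB (Ak k))
    have hBkex : ∀ k, ∃ B : E n →L[ℝ] E n, FirmNonexp B ∧
        ((MB (Ak k) : Set (E2 n)) = (MB B : Set (E2 n))) :=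
      fun k => tcone_subspace_form hWopen hfirm2 (hzkW k).1 (hzkW k).2 (finrank_MB _) (htc k)
    choose Bk hBfirm hBeq using hBkex
    obtain ⟨B, -, ψ, hψ, hconv⟩ := (isCompact_closedBall (0 : E n →L[ℝ] E n) 1).tendsto_subseq
      (x := fun k => Bk (φ k)) (fun k => by
        rw [mem_closedBall, dist_zero_right]
        exact norm_le_one_of_firm (hBfirm (φ k)))
    have hLeq : (L : Set (E2 n)) = (MB B : Set (E2 n)) := by
      apply MB_limit (Lk := fun k => MB (Ak (φ (ψ k)))) (Bk := fun k => Bk (φ (ψ k)))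
        (fun k => hBeq _) (fun k => norm_le_one_of_firm (hBfirm _)) hconv
      exact hdZ.comp hψ.tendsto_atTop
    have hrankL : Module.finrank ℝ L = n := by
      rw [SetLike.coe_injective hLeq, finrank_MB]
    refine ⟨L, hrankL, fun k => zk (φ k), fun k => MB (Ak (φ k)), ?_, ?_, ?_⟩
    · intro k
      exact ⟨(hzkW (φ k)).1, finrank_MB _, htc (φ k)⟩
    · exact hzk.comp hφ.tendsto_atTop
    · exact hdZ
  -- Part 3: the form of the elements of Sp F z
  refine ⟨part1, part2, δ, hδpos, ?_⟩
  intro z hzF hdist L hL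
  have hzW : z ∈ W := hδ (by rwa [mem_ball])
  obtain ⟨B, hBfirm, hBeq⟩ := Sp_elem_form hWopen hfirm2 hzW hL
  refine ⟨B, hBfirm, ?_, ?_⟩
  · rw [hBeq, MB_coe]
  · exact adjS_MB B hBeq

end SCD
end
end

section
/- Assume that F : ℝ^n ⇒ ℝ^n is SCD semismooth* at (x̄, ȳ) ∈ gph F. Then for every ε > 0 there is δ > 0 such that the inequality ‖x − C_Lᵀ(y − ȳ) − x̄‖ ≤ ε·√(n(1 + ‖C_L‖²))·‖(x, y) − (x̄, ȳ)‖ holds for every (x, y) ∈ gph F with ‖(x, y) − (x̄, ȳ)‖ ≤ δ and every L ∈ Sp* F(x, y) ∩ Z_n^{reg}. -/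
open Filter Topology Metric Set
open scoped InnerProductSpace RealInnerProductSpace ENNReal NNReal

noncomputable section

namespace SCD

variable {n : ℕ}

/- STATEMENT 14 -/
theorem stmt14 (n : ℕ) (F : E n → Set (E n)) (zb : E2 n) (hzb : zb ∈ gph F)
    (hss : SCDSemismoothAt F zb) :
    ∀ ε > (0 : ℝ), ∃ δ > (0 : ℝ), ∀ z ∈ gph F, dist z zb ≤ δ →
      ∀ L ∈ SpStar F z, L ∈ Znreg n → ∀ C : E n →L[ℝ] E n, L = rgeCI C →
        ‖fst2 z - ContinuousLinearMap.adjoint C (snd2 z - snd2 zb) - fst2 zb‖ ≤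
          ε * Real.sqrt (n * (1 + ‖C‖ ^ 2)) * ‖z - zb‖ := by
  intro ε hε
  obtain ⟨δ, hδ, hmain⟩ := hss.2 ε hε
  refine ⟨δ, hδ, ?_⟩
  intro z hz hdist L hL _hreg C hLC
  set p : E n := fst2 z - ContinuousLinearMap.adjoint C (snd2 z - snd2 zb) - fst2 zb with hp
  show ‖p‖ ≤ _
  have hRHS : 0 ≤ ε * Real.sqrt (n * (1 + ‖C‖ ^ 2)) * ‖z - zb‖ := by positivity
  rcases Nat.eq_zero_or_pos n with hn | hn
  · have hsub : Subsingleton (E n) := by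
      subst hn; infer_instance
    have hp0 : p = 0 := Subsingleton.elim _ _
    rw [hp0, norm_zero]; exact hRHS
  · set w : E2 n := graphMapRev C p with hw
    have hwL : w ∈ L := by
      rw [hLC]; exact ⟨p, rfl⟩
    have hfst : fst2 w = C p := rfl
    have hsnd : snd2 w = p := rfl
    have hkey := hmain z hz hdist L hL w hwL
    rw [hfst, hsnd] at hkey
    have hinner : ⟪p, fst2 z - fst2 zb⟫_ℝ - ⟪C p, snd2 z - snd2 zb⟫_ℝ = ‖p‖ ^ 2 := by
      rw [← ContinuousLinearMap.adjoint_inner_right C p (snd2 z - snd2 zb),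
        ← inner_sub_right, ← real_inner_self_eq_norm_sq]
      congr 1
      rw [hp]; abel
    rw [hinner, abs_of_nonneg (by positivity)] at hkey
    -- bound ‖w‖
    have hw2 : ‖w‖ ^ 2 ≤ (1 + ‖C‖ ^ 2) * ‖p‖ ^ 2 := by
      have heq : ‖w‖ ^ 2 = ‖C p‖ ^ 2 + ‖p‖ ^ 2 := WithLp.prod_norm_sq_eq_of_L2 w
      have hCp : ‖C p‖ ≤ ‖C‖ * ‖p‖ := C.le_opNorm p
      have hCp2 : ‖C p‖ ^ 2 ≤ ‖C‖ ^ 2 * ‖p‖ ^ 2 := by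
        rw [← mul_pow]
        exact pow_le_pow_left₀ (norm_nonneg _) hCp 2
      nlinarith [norm_nonneg p]
    have hwle : ‖w‖ ≤ Real.sqrt (1 + ‖C‖ ^ 2) * ‖p‖ := by
      have h := Real.sqrt_le_sqrt hw2
      rwa [Real.sqrt_sq (norm_nonneg _), Real.sqrt_mul (by positivity),
        Real.sqrt_sq (norm_nonneg _)] at h
    have hsq : Real.sqrt (1 + ‖C‖ ^ 2) ≤ Real.sqrt (n * (1 + ‖C‖ ^ 2)) := by
      apply Real.sqrt_le_sqrt
      have hn1 : (1 : ℝ) ≤ n := by exact_mod_cast hn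
      nlinarith [norm_nonneg C, sq_nonneg ‖C‖]
    rcases eq_or_lt_of_le (norm_nonneg p) with h0 | h0
    · rw [← h0]; exact hRHS
    · have : ‖p‖ ^ 2 ≤ ε * ‖z - zb‖ * (Real.sqrt (1 + ‖C‖ ^ 2) * ‖p‖) := by
        refine le_trans hkey ?_
        have : 0 ≤ ε * ‖z - zb‖ := by positivity
        exact mul_le_mul_of_nonneg_left hwle this
      have hple : ‖p‖ ≤ ε * ‖z - zb‖ * Real.sqrt (1 + ‖C‖ ^ 2) := by
        have := (mul_le_mul_iff_of_pos_right h0).mp (by nlinarith : ‖p‖ * ‖p‖ ≤ ε * ‖z - zb‖ * Real.sqrt (1 + ‖C‖ ^ 2) * ‖p‖)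
        exact this
      calc ‖p‖ ≤ ε * ‖z - zb‖ * Real.sqrt (1 + ‖C‖ ^ 2) := hple
        _ ≤ ε * Real.sqrt (n * (1 + ‖C‖ ^ 2)) * ‖z - zb‖ := by
            rw [mul_right_comm]
            exact mul_le_mul_of_nonneg_right (mul_le_mul_of_nonneg_left hsq hε.le) (norm_nonneg _)


end SCD
end
end
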